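/- arXiv:2310.17603 — 7 statements merged into one kernel-verified Lean document; each statement's English description precedes it below -/
import Mathlib

section
/- (Lower bound on Λ.) Let p be a positive integer and θ, α ∈ ℝ. Let θ₀ ∈ Θ_α satisfy |θ − θ₀|_{2π} ≤ |θ − χ|_{2π} for every χ ∈ Θ_α, and let θ* ∈ Θ* satisfy |θ₀ − θ*|_{2π} ≤ |θ₀ − χ|_{2π} for every χ ∈ Θ*. Then (p²/8) · |θ − θ₀|_{2π} · |θ − θ*|_{2π} ≤ |Λ(θ,α)|. -/
open Real

/-- `Λ(θ,α) := cos(pθ) - (-1)^p cos(pα)` for real arguments. -/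
noncomputable def Lam (p : ℕ) (α θ : ℝ) : ℝ :=
  Real.cos ((p : ℝ) * θ) - (-1 : ℝ) ^ p * Real.cos ((p : ℝ) * α)

/-- The 2π-periodic distance `|x|_{2π} := min_{n ∈ ℤ} |x + 2nπ|`. -/
noncomputable def dist2pi (x : ℝ) : ℝ :=
  sInf {d : ℝ | ∃ n : ℤ, d = |x + 2 * (n : ℝ) * π|}



lemma dist2pi_le (x : ℝ) (n : ℤ) : dist2pi x ≤ |x + 2 * (n : ℝ) * π| := by
  refine csInf_le ⟨0, ?_⟩ ⟨n, rfl⟩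
  rintro d ⟨m, rfl⟩; positivity

lemma dist2pi_exists (x : ℝ) :
    ∃ n : ℤ, dist2pi x = |x + 2 * (n : ℝ) * π| ∧ |x + 2 * (n : ℝ) * π| ≤ π := by
  refine ⟨-round (x / (2 * π)), ?_, ?_⟩
  · refine le_antisymm (dist2pi_le x _) (le_csInf ⟨_, ⟨0, rfl⟩⟩ ?_)
    rintro d ⟨m, rfl⟩
    have hπ := Real.pi_pos
    have key : |x / (2*π) - round (x / (2*π))| ≤ |x / (2*π) + m| := by
      rcases eq_or_ne (-m) (round (x / (2*π))) with h | h
      · rw [← h]; push_cast; rw [sub_neg_eq_add]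
      · have h1 : |x / (2*π) - round (x / (2*π))| ≤ 1/2 := abs_sub_round _
        have h2 : (1:ℝ) ≤ |(-m : ℝ) - round (x / (2*π))| := by
          have e : (-(m:ℝ)) - round (x/(2*π)) = ((-m - round (x / (2*π)) : ℤ) : ℝ) := by push_cast; ring
          rw [e, ← Int.cast_abs]
          exact_mod_cast Int.one_le_abs (sub_ne_zero.2 h)
        have h3 : |(-m : ℝ) - round (x / (2*π))| ≤ |x / (2*π) - round (x / (2*π))| + |x / (2*π) + m| := by
          have := abs_sub (x / (2*π) - round (x / (2*π))) (x / (2*π) + m)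
          calc |(-m : ℝ) - round (x / (2*π))| = |(x / (2*π) - round (x / (2*π))) - (x / (2*π) + m)| := by ring_nf
            _ ≤ _ := abs_sub _ _
        linarith
    have a1 : x + 2 * ((-round (x / (2*π)) : ℤ) : ℝ) * π = 2*π*(x/(2*π) - round (x/(2*π))) := by
      push_cast; field_simp; ring
    have a2 : x + 2 * (m : ℝ) * π = 2*π*(x/(2*π) + m) := by field_simp
    rw [a1, a2, abs_mul (2*π), abs_mul (2*π), abs_of_pos (by linarith : (0:ℝ) < 2*π)]
    nlinarith
  · have hπ := Real.pi_pos
    have h1 : |x / (2*π) - round (x / (2*π))| ≤ 1/2 := abs_sub_round _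
    have a1 : x + 2 * ((-round (x / (2*π)) : ℤ) : ℝ) * π = 2*π*(x/(2*π) - round (x/(2*π))) := by
      push_cast; field_simp; ring
    rw [a1, abs_mul (2*π), abs_of_pos (by linarith : (0:ℝ) < 2*π)]
    nlinarith

lemma dist2pi_nonneg (x : ℝ) : 0 ≤ dist2pi x := by
  obtain ⟨n, h, -⟩ := dist2pi_exists x; rw [h]; positivity

lemma dist2pi_le_pi (x : ℝ) : dist2pi x ≤ π := by
  obtain ⟨n, h, h2⟩ := dist2pi_exists x; rw [h]; exact h2

lemma dist2pi_le_abs (x : ℝ) : dist2pi x ≤ |x| := by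
  simpa using dist2pi_le x 0

lemma dist2pi_neg (x : ℝ) : dist2pi (-x) = dist2pi x := by
  unfold dist2pi
  congr 1
  ext d
  constructor
  · rintro ⟨n, rfl⟩; exact ⟨-n, by push_cast; rw [← abs_neg]; ring_nf⟩
  · rintro ⟨n, rfl⟩; exact ⟨-n, by push_cast; rw [← abs_neg]; ring_nf⟩

lemma dist2pi_add (x y : ℝ) : dist2pi (x + y) ≤ dist2pi x + dist2pi y := by
  obtain ⟨n, hn, -⟩ := dist2pi_exists x
  obtain ⟨m, hm, -⟩ := dist2pi_exists y
  calc dist2pi (x + y) ≤ |(x+y) + 2*((n+m : ℤ) : ℝ)*π| := dist2pi_le _ _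
    _ ≤ |x + 2*(n:ℝ)*π| + |y + 2*(m:ℝ)*π| := by
        push_cast
        calc |(x+y) + 2*((n:ℝ)+m)*π| = |(x + 2*(n:ℝ)*π) + (y + 2*(m:ℝ)*π)| := by ring_nf
          _ ≤ _ := abs_add_le _ _
    _ = dist2pi x + dist2pi y := by rw [hn, hm]

lemma sin_dist2pi_half_le (x : ℝ) : sin (dist2pi x / 2) ≤ |sin (x / 2)| := by
  obtain ⟨n, hn, hle⟩ := dist2pi_exists x
  set s := x + 2*(n:ℝ)*π with hs
  have hx2 : x / 2 = s/2 + (-n : ℤ) * π := by push_cast; rw [hs]; ring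
  have : |sin (x/2)| = |sin (s/2)| := by
    have habs : |((-1:ℝ)) ^ (-n : ℤ)| = 1 := by
      rcases Int.even_or_odd (-n) with h | h
      · rw [h.neg_one_zpow, abs_one]
      · rw [h.neg_one_zpow, abs_neg, abs_one]
    rw [hx2, Real.sin_add_int_mul_pi, abs_mul, habs, one_mul]
  rw [this, hn]
  rcases le_or_gt 0 s with h | h
  · rw [abs_of_nonneg h]; exact le_abs_self _
  · rw [abs_of_neg h]
    have : -s / 2 = -(s/2) := by ring
    rw [this, Real.sin_neg]
    exact neg_le_abs _


lemma sin_half_lower {B : ℝ} (hB0 : 0 ≤ B) (hB : B ≤ π) :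
    π / 16 * (B + min B (π/2)) ≤ sin (B/2) := by
  have hπ := Real.pi_pos
  rcases le_total B (π/2) with h | h
  · rw [min_eq_left h]
    rcases eq_or_lt_of_le hB0 with rfl | h0
    · simp
    · have hc := Real.sin_gt_sub_cube (by linarith : (0:ℝ) < B/2)
      nlinarith [Real.pi_lt_d2, Real.pi_gt_three, sq_nonneg B]
  · rw [min_eq_right h]
    have hc : 1 - (π/2 - B/2)^2/2 ≤ cos (π/2 - B/2) := Real.one_sub_sq_div_two_le_cos
    rw [Real.cos_pi_div_two_sub] at hc
    have hs0 : 0 ≤ π/2 - B/2 := by linarith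
    have hs1 : π/2 - B/2 ≤ π/4 := by linarith
    nlinarith [Real.pi_lt_d2, Real.pi_gt_three,
      mul_nonneg (by linarith : (0:ℝ) ≤ π/4 - (π/2 - B/2)) hs0]

lemma key_ineq {A B : ℝ} (hA0 : 0 ≤ A) (hAB : A ≤ B) (hB : B ≤ π) :
    A * (B + min B (π/2)) / 8 ≤ 2 * sin (A/2) * sin (B/2) := by
  have hπ := Real.pi_pos
  have hB0 : 0 ≤ B := le_trans hA0 hAB
  have hs : A / π ≤ sin (A/2) := by
    have := Real.mul_le_sin (by linarith : (0:ℝ) ≤ A/2) (by linarith : A/2 ≤ π/2)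
    calc A / π = 2/π * (A/2) := by field_simp
      _ ≤ _ := this
  have hB2 := sin_half_lower hB0 hB
  have hsB : 0 ≤ sin (B/2) := sin_nonneg_of_nonneg_of_le_pi (by linarith) (by linarith)
  have h1 : A/π * (π/16*(B + min B (π/2))) ≤ A/π * sin (B/2) :=
    mul_le_mul_of_nonneg_left hB2 (by positivity)
  have e : A/π * (π/16*(B + min B (π/2))) = A*(B + min B (π/2))/16 := by
    field_simp
  have h2 : A/π * sin (B/2) ≤ sin (A/2) * sin (B/2) := mul_le_mul_of_nonneg_right hs hsB
  linarith

lemma key_ineq2 {a δ A B : ℝ} (ha : 0 ≤ a) (haA : a ≤ A) (haB : a ≤ B)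
    (hA : A ≤ π) (hB : B ≤ π) (hδ0 : 0 ≤ δ) (hδ : δ ≤ π/2) (hδ2 : 2*δ ≤ A + B) :
    a * (a + δ) / 8 ≤ 2 * sin (A/2) * sin (B/2) := by
  rcases le_total A B with h | h
  · have hk := key_ineq (le_trans ha haA) h hB
    have hm : δ ≤ min B (π/2) := le_min (by linarith) hδ
    have h1 : a + δ ≤ B + min B (π/2) := by
      have : a ≤ B := le_trans haA h
      linarith
    nlinarith [mul_le_mul haA h1 (by linarith : (0:ℝ) ≤ a + δ) (le_trans ha haA)]
  · have hk := key_ineq (le_trans ha haB) h hA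
    have hm : δ ≤ min A (π/2) := le_min (by linarith) hδ
    have h1 : a + δ ≤ A + min A (π/2) := by
      have : a ≤ A := haA
      linarith
    nlinarith [mul_le_mul haB h1 (by linarith : (0:ℝ) ≤ a + δ) (le_trans ha haB)]

section Aux

lemma dist2pi_add_int_mul (x : ℝ) (k : ℤ) : dist2pi (x + 2*(k:ℝ)*π) = dist2pi x := by
  unfold dist2pi; congr 1; ext d
  constructor
  · rintro ⟨n, rfl⟩; exact ⟨k + n, by push_cast; ring_nf⟩
  · rintro ⟨n, rfl⟩; exact ⟨n - k, by push_cast; ring_nf⟩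

end Aux

theorem lower_bound_on_Lam
    (p : ℕ) (hp : 0 < p) (θ α θ₀ θs : ℝ)
    (hθ₀mem : Lam p α θ₀ = 0)
    (hθ₀min : ∀ χ : ℝ, Lam p α χ = 0 → dist2pi (θ - θ₀) ≤ dist2pi (θ - χ))
    (hθsmem : ∃ n : ℤ, θs = (n : ℝ) * π / p)
    (hθsmin : ∀ χ : ℝ, (∃ n : ℤ, χ = (n : ℝ) * π / p) →
      dist2pi (θ₀ - θs) ≤ dist2pi (θ₀ - χ)) :
    (p : ℝ) ^ 2 / 8 * dist2pi (θ - θ₀) * dist2pi (θ - θs) ≤ |Lam p α θ| := by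
  have hπ := Real.pi_pos
  have hp0 : (0:ℝ) < (p:ℝ) := by exact_mod_cast hp
  -- rewrite Lam as a cosine difference
  have hLam : ∀ x : ℝ, Lam p α x = cos ((p:ℝ)*x) - cos ((p:ℝ)*(α+π)) := by
    intro x
    have h1 : (p:ℝ)*(α+π) = (p:ℝ)*α + ((p:ℤ):ℝ)*π := by push_cast; ring
    rw [Lam, h1, Real.cos_add_int_mul_pi, zpow_natCast]
  set A := dist2pi ((p:ℝ)*(θ - (α+π))) with hA
  set B := dist2pi ((p:ℝ)*(θ + (α+π))) with hB
  set δ := dist2pi (2*(p:ℝ)*(α+π)) / 2 with hδ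
  set a := (p:ℝ) * dist2pi (θ - θ₀) with ha
  -- a ≤ A
  have haA : a ≤ A := by
    obtain ⟨n, hn, -⟩ := dist2pi_exists ((p:ℝ)*(θ - (α+π)))
    set χ := (α+π) - 2*(n:ℝ)*π/p with hχdef
    have hχ : Lam p α χ = 0 := by
      rw [hLam]
      have e : (p:ℝ)*χ = (p:ℝ)*(α+π) + (-n:ℤ)*(2*π) := by
        rw [hχdef]; push_cast; field_simp; ring
      rw [e, Real.cos_add_int_mul_two_pi, sub_self]
    have h2 : dist2pi (θ - χ) ≤ A / p := by
      calc dist2pi (θ - χ) ≤ |θ - χ| := dist2pi_le_abs _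
        _ = A / p := by
            have e : θ - χ = ((p:ℝ)*(θ - (α+π)) + 2*(n:ℝ)*π)/p := by
              rw [hχdef]; field_simp; ring
            rw [e, abs_div, abs_of_pos hp0, hA, hn]
    have h3 := hθ₀min χ hχ
    rw [ha]
    calc (p:ℝ) * dist2pi (θ - θ₀) ≤ (p:ℝ) * (A / p) :=
          mul_le_mul_of_nonneg_left (le_trans h3 h2) hp0.le
      _ = A := by field_simp
  -- a ≤ B
  have haB : a ≤ B := by
    obtain ⟨n, hn, -⟩ := dist2pi_exists ((p:ℝ)*(θ + (α+π)))
    set χ := -(α+π) - 2*(n:ℝ)*π/p with hχdef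
    have hχ : Lam p α χ = 0 := by
      rw [hLam]
      have e : (p:ℝ)*χ = -((p:ℝ)*(α+π) + (n:ℤ)*(2*π)) := by
        rw [hχdef]; push_cast; field_simp; ring
      rw [e, Real.cos_neg, Real.cos_add_int_mul_two_pi, sub_self]
    have h2 : dist2pi (θ - χ) ≤ B / p := by
      calc dist2pi (θ - χ) ≤ |θ - χ| := dist2pi_le_abs _
        _ = B / p := by
            have e : θ - χ = ((p:ℝ)*(θ + (α+π)) + 2*(n:ℝ)*π)/p := by
              rw [hχdef]; field_simp; ring
            rw [e, abs_div, abs_of_pos hp0, hB, hn]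
    have h3 := hθ₀min χ hχ
    rw [ha]
    calc (p:ℝ) * dist2pi (θ - θ₀) ≤ (p:ℝ) * (B / p) :=
          mul_le_mul_of_nonneg_left (le_trans h3 h2) hp0.le
      _ = B := by field_simp
  -- 2δ ≤ A + B
  have hδ2 : 2*δ ≤ A + B := by
    have e : 2*(p:ℝ)*(α+π) = (p:ℝ)*(θ + (α+π)) + -((p:ℝ)*(θ - (α+π))) := by ring
    have : dist2pi (2*(p:ℝ)*(α+π)) ≤ B + A := by
      rw [e]
      refine le_trans (dist2pi_add _ _) ?_
      rw [dist2pi_neg]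
    rw [hδ]; linarith
  -- dist2pi (θ₀ - θs) ≤ δ / p
  have hθ0s : dist2pi (θ₀ - θs) ≤ δ / p := by
    have hcos : cos ((p:ℝ)*θ₀) = cos ((p:ℝ)*(α+π)) := by
      have := hθ₀mem; rw [hLam] at this; linarith
    have hdd : dist2pi (2*(p:ℝ)*(α+π)) = dist2pi (2*(p:ℝ)*θ₀) := by
      rw [Real.cos_eq_cos_iff] at hcos
      obtain ⟨k, hk | hk⟩ := hcos
      · rw [show 2*(p:ℝ)*(α+π) = 2*(p:ℝ)*θ₀ + 2*((2*k : ℤ):ℝ)*π by push_cast; linarith]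
        exact dist2pi_add_int_mul _ _
      · rw [show 2*(p:ℝ)*(α+π) = -(2*(p:ℝ)*θ₀) + 2*((2*k : ℤ):ℝ)*π by push_cast; linarith]
        rw [dist2pi_add_int_mul, dist2pi_neg]
    obtain ⟨m, hm, -⟩ := dist2pi_exists (2*(p:ℝ)*θ₀)
    have hmem : ∃ n : ℤ, (-(m:ℝ)*π/p) = (n : ℝ) * π / p := ⟨-m, by push_cast; ring⟩
    have h3 := hθsmin _ hmem
    have h4 : dist2pi (θ₀ - -(m:ℝ)*π/p) ≤ δ / p := by
      calc dist2pi (θ₀ - -(m:ℝ)*π/p) ≤ |θ₀ - -(m:ℝ)*π/p| := dist2pi_le_abs _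
        _ = |2*(p:ℝ)*θ₀ + 2*(m:ℝ)*π| / (2*(p:ℝ)) := by
            have e : θ₀ - -(m:ℝ)*π/p = (2*(p:ℝ)*θ₀ + 2*(m:ℝ)*π)/(2*(p:ℝ)) := by
              field_simp; ring
            rw [e, abs_div, abs_of_pos (by positivity : (0:ℝ) < 2*(p:ℝ))]
        _ = δ / p := by rw [← hm, ← hdd, hδ]; ring
    exact le_trans h3 h4
  -- triangle for dist2pi (θ - θs)
  have hds : dist2pi (θ - θs) ≤ dist2pi (θ - θ₀) + δ / p := by
    calc dist2pi (θ - θs) = dist2pi ((θ - θ₀) + (θ₀ - θs)) := by ring_nf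
      _ ≤ dist2pi (θ - θ₀) + dist2pi (θ₀ - θs) := dist2pi_add _ _
      _ ≤ _ := by linarith
  -- product form and sine bounds
  have hprod : |Lam p α θ| = 2 * |sin ((p:ℝ)*(θ + (α+π))/2)| * |sin ((p:ℝ)*(θ - (α+π))/2)| := by
    rw [hLam, Real.cos_sub_cos]
    rw [show ((p:ℝ)*θ + (p:ℝ)*(α+π))/2 = (p:ℝ)*(θ + (α+π))/2 by ring,
        show ((p:ℝ)*θ - (p:ℝ)*(α+π))/2 = (p:ℝ)*(θ - (α+π))/2 by ring]
    rw [abs_mul, abs_mul]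
    norm_num
  have hsinA : sin (A/2) ≤ |sin ((p:ℝ)*(θ - (α+π))/2)| := by
    have := sin_dist2pi_half_le ((p:ℝ)*(θ - (α+π)))
    rwa [← hA] at this
  have hsinB : sin (B/2) ≤ |sin ((p:ℝ)*(θ + (α+π))/2)| := by
    have := sin_dist2pi_half_le ((p:ℝ)*(θ + (α+π)))
    rwa [← hB] at this
  have hA0 : 0 ≤ A := dist2pi_nonneg _
  have hB0 : 0 ≤ B := dist2pi_nonneg _
  have hAπ : A ≤ π := dist2pi_le_pi _
  have hBπ : B ≤ π := dist2pi_le_pi _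
  have hsA0 : 0 ≤ sin (A/2) := sin_nonneg_of_nonneg_of_le_pi (by linarith) (by linarith)
  have hsB0 : 0 ≤ sin (B/2) := sin_nonneg_of_nonneg_of_le_pi (by linarith) (by linarith)
  have hkey : a * (a + δ) / 8 ≤ 2 * sin (A/2) * sin (B/2) :=
    key_ineq2 (by rw [ha]; exact mul_nonneg hp0.le (dist2pi_nonneg _)) haA haB hAπ hBπ
      (by rw [hδ]; have := dist2pi_nonneg (2*(p:ℝ)*(α+π)); linarith)
      (by rw [hδ]; have := dist2pi_le_pi (2*(p:ℝ)*(α+π)); linarith)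
      hδ2
  have hfinal : 2 * sin (A/2) * sin (B/2) ≤ |Lam p α θ| := by
    rw [hprod]
    have h1 : sin (A/2) * sin (B/2) ≤
        |sin ((p:ℝ)*(θ + (α+π))/2)| * |sin ((p:ℝ)*(θ - (α+π))/2)| := by
      calc sin (A/2) * sin (B/2)
          ≤ |sin ((p:ℝ)*(θ - (α+π))/2)| * |sin ((p:ℝ)*(θ + (α+π))/2)| :=
            mul_le_mul hsinA hsinB hsB0 (abs_nonneg _)
        _ = _ := by ring
    linarith
  -- final chain
  have hd0 : 0 ≤ dist2pi (θ - θ₀) := dist2pi_nonneg _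
  have hstep : (p : ℝ) ^ 2 / 8 * dist2pi (θ - θ₀) * dist2pi (θ - θs) ≤ a * (a + δ) / 8 := by
    have h1 : (p : ℝ) ^ 2 / 8 * dist2pi (θ - θ₀) * dist2pi (θ - θs)
        ≤ (p : ℝ) ^ 2 / 8 * dist2pi (θ - θ₀) * (dist2pi (θ - θ₀) + δ / p) := by
      exact mul_le_mul_of_nonneg_left hds (mul_nonneg (by positivity) hd0)
    have h2 : (p : ℝ) ^ 2 / 8 * dist2pi (θ - θ₀) * (dist2pi (θ - θ₀) + δ / p)
        = a * (a + δ) / 8 := by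
      rw [ha]; field_simp
    linarith
  linarith
end

section
/- (Monotone vertical growth.) Let p be a positive integer and θ, α ∈ ℝ. The function c ↦ |Λ(θ + i c, α)| is nondecreasing on [0,∞): for all real 0 ≤ c₁ ≤ c₂, |Λ(θ + i c₁, α)| ≤ |Λ(θ + i c₂, α)|. -/
open Real

/-- `Λ(z,α) := cos(pz) - (-1)^p cos(pα)` for complex `z` and real `α`. -/
noncomputable def LamC (p : ℕ) (α : ℝ) (z : ℂ) : ℂ :=
  Complex.cos ((p : ℂ) * z) - (-1 : ℂ) ^ p * Complex.cos ((p : ℂ) * (α : ℂ))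

lemma cos_re_im (x y : ℝ) :
    Complex.cos ((x : ℂ) + (y : ℂ) * Complex.I) =
      (Real.cos x * Real.cosh y : ℝ) - (Real.sin x * Real.sinh y : ℝ) * Complex.I := by
  rw [Complex.cos_add, Complex.cos_mul_I, Complex.sin_mul_I]
  push_cast
  ring

lemma normSq_Lam (p : ℕ) (α θ c : ℝ) :
    Complex.normSq (LamC p α ((θ : ℂ) + c * Complex.I)) =
      (Real.cos (p * θ) * Real.cosh (p * c) - (-1 : ℝ) ^ p * Real.cos (p * α)) ^ 2
        + (Real.sin (p * θ) * Real.sinh (p * c)) ^ 2 := by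
  have h1 : (p : ℂ) * ((θ : ℂ) + c * Complex.I) = ((p * θ : ℝ) : ℂ) + ((p * c : ℝ) : ℂ) * Complex.I := by
    push_cast; ring
  have h2 : (p : ℂ) * (α : ℂ) = ((p * α : ℝ) : ℂ) := by push_cast; ring
  rw [LamC, h1, h2, cos_re_im, ← Complex.ofReal_cos]
  have : ((Real.cos (p * θ) * Real.cosh (p * c) : ℝ) : ℂ) -
      ((Real.sin (p * θ) * Real.sinh (p * c) : ℝ) : ℂ) * Complex.I -
      (-1 : ℂ) ^ p * ((Real.cos (p * α) : ℝ) : ℂ) =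
      Complex.mk (Real.cos (p * θ) * Real.cosh (p * c) - (-1 : ℝ) ^ p * Real.cos (p * α))
        (-(Real.sin (p * θ) * Real.sinh (p * c))) := by
    rw [Complex.mk_eq_add_mul_I]
    push_cast
    ring
  rw [this, Complex.normSq_mk]
  ring

theorem abs_Lam_monotone_vertical (p : ℕ) (hp : 0 < p) (θ α : ℝ)
    (c₁ c₂ : ℝ) (hc₁ : 0 ≤ c₁) (hc₁₂ : c₁ ≤ c₂) :
    ‖LamC p α ((θ : ℂ) + c₁ * Complex.I)‖
      ≤ ‖LamC p α ((θ : ℂ) + c₂ * Complex.I)‖ := by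
  rw [Complex.norm_def, Complex.norm_def]
  apply Real.sqrt_le_sqrt
  rw [normSq_Lam, normSq_Lam]
  set t := Real.cos (p * θ)
  set s := Real.sin (p * θ)
  set A : ℝ := (-1 : ℝ) ^ p * Real.cos (p * α)
  have hA : |A| ≤ 1 := by
    have := Real.abs_cos_le_one (p * α)
    calc |A| = |(-1 : ℝ) ^ p| * |Real.cos (p * α)| := abs_mul _ _
    _ ≤ 1 := by rw [abs_pow, abs_neg, abs_one, one_pow, one_mul]; exact this
  have ht : |t| ≤ 1 := Real.abs_cos_le_one _
  have hts : t ^ 2 + s ^ 2 = 1 := Real.cos_sq_add_sin_sq _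
  have hx1 : (1 : ℝ) ≤ Real.cosh (p * c₁) := Real.one_le_cosh _
  have hmono : Real.cosh (p * c₁) ≤ Real.cosh (p * c₂) := by
    apply Real.cosh_le_cosh.mpr
    have hp0 : (0 : ℝ) ≤ p := by positivity
    rw [abs_of_nonneg (by positivity), abs_of_nonneg (by nlinarith)]
    nlinarith
  have hs1 : Real.sinh (p * c₁) ^ 2 = Real.cosh (p * c₁) ^ 2 - 1 := Real.sinh_sq _
  have hs2 : Real.sinh (p * c₂) ^ 2 = Real.cosh (p * c₂) ^ 2 - 1 := Real.sinh_sq _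
  set x₁ := Real.cosh (p * c₁)
  set x₂ := Real.cosh (p * c₂)
  have hAt : |A * t| ≤ 1 := by
    rw [abs_mul]
    calc |A| * |t| ≤ 1 * 1 := mul_le_mul hA ht (abs_nonneg _) (by linarith [abs_nonneg A])
    _ = 1 := one_mul 1
  have hAt' : A * t ≤ 1 := le_trans (le_abs_self _) hAt
  nlinarith [sq_nonneg (x₂ - x₁), sq_nonneg s, mul_nonneg (sub_nonneg.mpr hmono) (sub_nonneg.mpr hAt')]
end

section
/- Let p be a positive integer, set c := ln(3 + π²/64)/p. Then for all θ, α ∈ ℝ, |Λ(θ + i c, α)| ≥ π²/128. -/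
set_option maxHeartbeats 1000000

open Real

theorem abs_Lam_on_horizontal_line_ge (p : ℕ) (hp : 0 < p) (θ α : ℝ)
    (c : ℝ) (hc : c = Real.log (3 + π ^ 2 / 64) / p) :
    π ^ 2 / 128 ≤ ‖LamC p α ((θ : ℂ) + c * Complex.I)‖ := by
  have hπ : 3 < π := Real.pi_gt_three
  have hπ2 : π < 3.15 := by linarith [Real.pi_lt_d2]
  set A : ℝ := 3 + π ^ 2 / 64 with hAdef
  have hA1 : (3 : ℝ) ≤ A := by rw [hAdef]; nlinarith [sq_nonneg π]
  have hA0 : (0 : ℝ) < A := by linarith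
  have hAinv0 : (0:ℝ) < A⁻¹ := by positivity
  have hAmul : A * A⁻¹ = 1 := mul_inv_cancel₀ (ne_of_gt hA0)
  have hAinv : A⁻¹ ≤ 1/3 := by nlinarith
  have hp0 : (p:ℝ) ≠ 0 := by positivity
  set x : ℝ := (p:ℝ) * θ with hx
  set y : ℝ := (p:ℝ) * c with hy
  have hpc : y = Real.log A := by rw [hy, hc]; field_simp
  have hcosh : Real.cosh y = (A + A⁻¹)/2 := by
    rw [hpc, Real.cosh_eq, Real.exp_log hA0, Real.exp_neg, Real.exp_log hA0]
  have hsinh : Real.sinh y = (A - A⁻¹)/2 := by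
    rw [hpc, Real.sinh_eq, Real.exp_log hA0, Real.exp_neg, Real.exp_log hA0]
  set E : ℝ := (-1:ℝ)^p * Real.cos ((p:ℝ) * α) with hE
  have hEle : |E| ≤ 1 := by
    rw [hE, abs_mul, abs_pow, abs_neg, abs_one, one_pow, one_mul]
    exact Real.abs_cos_le_one _
  have hLam : LamC p α ((θ : ℂ) + c * Complex.I)
      = ((Real.cos x * Real.cosh y - E : ℝ) : ℂ)
        + ((-(Real.sin x * Real.sinh y) : ℝ) : ℂ) * Complex.I := by
    unfold LamC
    have hz : (p:ℂ) * ((θ:ℂ) + c * Complex.I) = (x:ℂ) + (y : ℂ) * Complex.I := by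
      rw [hx, hy]; push_cast; ring
    rw [hz, Complex.cos_add, Complex.cos_mul_I, Complex.sin_mul_I]
    have h1 : ((p:ℂ) * (α:ℂ)) = (((p:ℝ) * α : ℝ) : ℂ) := by push_cast; ring
    rw [h1, ← Complex.ofReal_cos, ← Complex.ofReal_sin, ← Complex.ofReal_cosh,
      ← Complex.ofReal_sinh, ← Complex.ofReal_cos]
    rw [hE]
    push_cast
    ring
  clear_value A x y E
  have hre : (LamC p α ((θ : ℂ) + c * Complex.I)).re = Real.cos x * Real.cosh y - E := by
    rw [hLam]
    simp only [Complex.add_re, Complex.ofReal_re, Complex.mul_re, Complex.ofReal_im,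
      Complex.I_re, Complex.I_im]
    ring
  have him : (LamC p α ((θ : ℂ) + c * Complex.I)).im = -(Real.sin x * Real.sinh y) := by
    rw [hLam]
    simp only [Complex.add_im, Complex.ofReal_im, Complex.mul_im, Complex.ofReal_re,
      Complex.I_re, Complex.I_im]
    ring
  rcases le_or_gt (1/10 : ℝ) |Real.sin x| with hs | hs
  · -- use imaginary part
    have h1 : |(LamC p α ((θ : ℂ) + c * Complex.I)).im|
        ≤ ‖LamC p α ((θ : ℂ) + c * Complex.I)‖ :=
      Complex.abs_im_le_norm _
    rw [him, abs_neg, abs_mul] at h1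
    have hsinhpos : (0:ℝ) ≤ Real.sinh y := by rw [hsinh]; nlinarith
    rw [abs_of_nonneg hsinhpos, hsinh] at h1
    have h2 : (1/10 : ℝ) * ((A - A⁻¹)/2) ≤ |Real.sin x| * ((A - A⁻¹)/2) := by
      apply mul_le_mul_of_nonneg_right hs
      nlinarith
    have h3 : π ^ 2 / 128 ≤ (1/10 : ℝ) * ((A - A⁻¹)/2) := by
      nlinarith [hA1, hAinv, hπ2, hπ]
    linarith
  · -- use real part
    have h1 : |(LamC p α ((θ : ℂ) + c * Complex.I)).re|
        ≤ ‖LamC p α ((θ : ℂ) + c * Complex.I)‖ :=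
      Complex.abs_re_le_norm _
    rw [hre] at h1
    have hcos2 : (99/100 : ℝ) ≤ Real.cos x ^ 2 := by
      have hsc := Real.sin_sq_add_cos_sq x
      have h2 : Real.sin x ^ 2 < 1/100 := by
        nlinarith [sq_abs (Real.sin x), abs_nonneg (Real.sin x)]
      linarith
    have hcosle : |Real.cos x| ≤ 1 := Real.abs_cos_le_one x
    have hcosge : (99/100 : ℝ) ≤ |Real.cos x| := by
      have habs : Real.cos x ^ 2 = |Real.cos x| * |Real.cos x| := by
        rw [← sq_abs]; ring
      have h7 : |Real.cos x| * |Real.cos x| ≤ |Real.cos x| * 1 :=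
        mul_le_mul_of_nonneg_left hcosle (abs_nonneg _)
      rw [habs] at hcos2; linarith
    have hcoshge : (3/2 : ℝ) ≤ Real.cosh y := by rw [hcosh]; nlinarith
    have htri : |Real.cos x| * Real.cosh y - |E| ≤ |Real.cos x * Real.cosh y - E| := by
      have h4 := abs_sub_abs_le_abs_sub (Real.cos x * Real.cosh y) E
      rw [abs_mul, abs_of_nonneg (by linarith : (0:ℝ) ≤ Real.cosh y)] at h4
      linarith
    have h5 : (99/100 : ℝ) * (3/2) ≤ |Real.cos x| * Real.cosh y :=
      mul_le_mul hcosge hcoshge (by norm_num) (abs_nonneg _)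
    have h6 : π ^ 2 / 128 ≤ (99/100 : ℝ) * (3/2) - 1 := by nlinarith
    linarith
end

section
/- (Existence of good vertical contour abscissae.) Let p be a positive integer and θ, α ∈ ℝ. Then there exist real numbers z₋ < θ < z₊ with z₊ − z₋ ≤ 5π/(2p) such that: (i) |z₋ − χ| ≥ π/(4p) and |z₊ − χ| ≥ π/(4p) for every χ ∈ Θ_α and every χ ∈ Θ*; (ii) |z₋ − θ| ≥ π/(4p) and |z₊ − θ| ≥ π/(4p); and consequently (iii) for every c ∈ ℝ and every z ∈ {z₋, z₊}, |Λ(z + i c, α)| · |z + i c − θ| ≥ π³/(512 p). -/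
open Real

/-- The scaled bad set: multiples of π together with `±γ + 2kπ`. -/
def IsBad (γ u : ℝ) : Prop :=
  (∃ k : ℤ, u = k * π) ∨ (∃ k : ℤ, u = γ + 2 * k * π) ∨ (∃ k : ℤ, u = -γ + 2 * k * π)

lemma far_of (L x d : ℝ) (hd : 0 ≤ d) (n : ℤ) (h1 : d ≤ x - n * L) (h2 : d ≤ (n + 1) * L - x) :
    ∀ k : ℤ, d ≤ |x - k * L| := by
  have hL : 0 ≤ L := by nlinarith
  intro k
  rcases le_or_gt k n with hk | hk
  · have hk' : (k : ℝ) ≤ n := by exact_mod_cast hk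
    have : d ≤ x - k * L := by nlinarith
    exact this.trans (le_abs_self _)
  · have hk' : (n : ℝ) + 1 ≤ k := by exact_mod_cast hk
    have : d ≤ k * L - x := by nlinarith
    calc d ≤ k * L - x := this
    _ = -(x - k * L) := by ring
    _ ≤ |x - k * L| := neg_le_abs _

lemma good_of (γ c : ℝ)
    (h1 : ∀ k : ℤ, π / 4 ≤ |c - k * π|)
    (h2 : ∀ k : ℤ, π / 4 ≤ |(c - γ) - k * (2 * π)|)
    (h3 : ∀ k : ℤ, π / 4 ≤ |(c + γ) - k * (2 * π)|) :
    ∀ u, IsBad γ u → π / 4 ≤ |c - u| := by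
  rintro u (⟨k, rfl⟩ | ⟨k, rfl⟩ | ⟨k, rfl⟩)
  · exact h1 k
  · have := h2 k; convert this using 2; ring
  · have := h3 k; convert this using 2; ring

lemma bad_shift (γ u : ℝ) (k : ℤ) (h : IsBad γ u) : IsBad γ (u + 2 * k * π) := by
  rcases h with ⟨n, rfl⟩ | ⟨n, rfl⟩ | ⟨n, rfl⟩
  · exact Or.inl ⟨n + 2 * k, by push_cast; ring⟩
  · exact Or.inr (Or.inl ⟨n + k, by push_cast; ring⟩)
  · exact Or.inr (Or.inr ⟨n + k, by push_cast; ring⟩)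

lemma good_shift (γ c : ℝ) (k : ℤ) (h : ∀ u, IsBad γ u → π / 4 ≤ |c - u|) :
    ∀ u, IsBad γ u → π / 4 ≤ |c + 2 * (k : ℝ) * π - u| := by
  intro u hu
  have hb := bad_shift γ u (-k) hu
  have h2 := h _ hb
  rw [show c - (u + 2 * ((-k : ℤ) : ℝ) * π) = c + 2 * (k : ℝ) * π - u by push_cast; ring] at h2
  exact h2

/-- Main combinatorial lemma: existence of two good abscissae around `t`. -/
lemma exists_good_pair (γ t : ℝ) (hγ0 : 0 ≤ γ) (hγπ : γ ≤ π) :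
    ∃ um up : ℝ, um ≤ t - π / 4 ∧ t + π / 4 ≤ up ∧ up - um ≤ 2 * π ∧
      ∀ u, IsBad γ u → π / 4 ≤ |um - u| ∧ π / 4 ≤ |up - u| := by
  have hπ := Real.pi_pos
  -- choose the two candidate points in the fundamental domain
  obtain ⟨a, b, ha1, ha2, hb1, hb2, hba1, hba2, ga, gb⟩ :
      ∃ a b : ℝ, π / 4 ≤ a ∧ a ≤ 3 * π / 4 ∧ 5 * π / 4 ≤ b ∧ b ≤ 7 * π / 4 ∧
        π / 2 ≤ b - a ∧ b - a ≤ 3 * π / 2 ∧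
        (∀ u, IsBad γ u → π / 4 ≤ |a - u|) ∧ (∀ u, IsBad γ u → π / 4 ≤ |b - u|) := by
    rcases le_or_gt γ (π / 2) with hg | hg
    · refine ⟨(γ + π) / 2, (3 * π - γ) / 2, by linarith, by linarith, by linarith, by linarith,
        by linarith, by linarith, ?_, ?_⟩
      · refine good_of _ _ (far_of _ _ _ (by positivity) 0 (by push_cast; linarith) (by push_cast; linarith))
          (far_of _ _ _ (by positivity) 0 (by push_cast; linarith) (by push_cast; linarith))
          (far_of _ _ _ (by positivity) 0 (by push_cast; linarith) (by push_cast; linarith))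
      · refine good_of _ _ (far_of _ _ _ (by positivity) 1 (by push_cast; linarith) (by push_cast; linarith))
          (far_of _ _ _ (by positivity) 0 (by push_cast; linarith) (by push_cast; linarith))
          (far_of _ _ _ (by positivity) 0 (by push_cast; linarith) (by push_cast; linarith))
    · refine ⟨γ / 2, 2 * π - γ / 2, by linarith, by linarith, by linarith, by linarith,
        by linarith, by linarith, ?_, ?_⟩
      · refine good_of _ _ (far_of _ _ _ (by positivity) 0 (by push_cast; linarith) (by push_cast; linarith))
          (far_of _ _ _ (by positivity) (-1) (by push_cast; linarith) (by push_cast; linarith))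
          (far_of _ _ _ (by positivity) 0 (by push_cast; linarith) (by push_cast; linarith))
      · refine good_of _ _ (far_of _ _ _ (by positivity) 1 (by push_cast; linarith) (by push_cast; linarith))
          (far_of _ _ _ (by positivity) 0 (by push_cast; linarith) (by push_cast; linarith))
          (far_of _ _ _ (by positivity) 1 (by push_cast; linarith) (by push_cast; linarith))
  -- reduce to the fundamental domain
  set m : ℤ := ⌊t / (2 * π)⌋ with hm
  have h2π : (0:ℝ) < 2 * π := by linarith
  have hml : (m : ℝ) * (2 * π) ≤ t := by
    have := Int.floor_le (t / (2 * π))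
    calc (m : ℝ) * (2 * π) ≤ (t / (2 * π)) * (2 * π) := by nlinarith
    _ = t := by field_simp
  have hmu : t < ((m : ℝ) + 1) * (2 * π) := by
    have := Int.lt_floor_add_one (t / (2 * π))
    calc t = (t / (2 * π)) * (2 * π) := by field_simp
    _ < ((m : ℝ) + 1) * (2 * π) := by nlinarith
  set t₀ : ℝ := t - 2 * m * π with ht₀
  have ht0l : 0 ≤ t₀ := by simp only [ht₀]; nlinarith
  have ht0u : t₀ < 2 * π := by simp only [ht₀]; nlinarith
  have key : ∀ c : ℝ, (∀ u, IsBad γ u → π / 4 ≤ |c - u|) → ∀ k : ℤ,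
      ∀ u, IsBad γ u → π / 4 ≤ |c + 2 * (k : ℝ) * π - u| := fun c h k => good_shift γ c k h
  rcases le_or_gt t₀ (a - π / 4) with h1 | h1
  · refine ⟨b + 2 * ((m - 1 : ℤ) : ℝ) * π, a + 2 * ((m : ℤ) : ℝ) * π, ?_, ?_, by push_cast; linarith,
      fun u hu => ⟨key b gb (m - 1) u hu, key a ga m u hu⟩⟩
    · push_cast; simp only [ht₀] at h1 ht0l; linarith
    · push_cast; simp only [ht₀] at h1; linarith
  rcases le_or_gt t₀ (a + π / 4) with h2 | h2
  · refine ⟨b + 2 * ((m - 1 : ℤ) : ℝ) * π, b + 2 * ((m : ℤ) : ℝ) * π, ?_, ?_, by push_cast; linarith,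
      fun u hu => ⟨key b gb (m - 1) u hu, key b gb m u hu⟩⟩
    · push_cast; simp only [ht₀] at h1; linarith
    · push_cast; simp only [ht₀] at h2; linarith
  rcases le_or_gt t₀ (b - π / 4) with h3 | h3
  · refine ⟨a + 2 * ((m : ℤ) : ℝ) * π, b + 2 * ((m : ℤ) : ℝ) * π, ?_, ?_, by push_cast; linarith,
      fun u hu => ⟨key a ga m u hu, key b gb m u hu⟩⟩
    · push_cast; simp only [ht₀] at h2; linarith
    · push_cast; simp only [ht₀] at h3; linarith
  rcases le_or_gt t₀ (b + π / 4) with h4 | h4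
  · refine ⟨a + 2 * ((m : ℤ) : ℝ) * π, a + 2 * ((m + 1 : ℤ) : ℝ) * π, ?_, ?_, by push_cast; linarith,
      fun u hu => ⟨key a ga m u hu, key a ga (m + 1) u hu⟩⟩
    · push_cast; simp only [ht₀] at h3; linarith
    · push_cast; simp only [ht₀] at h4; linarith
  · refine ⟨b + 2 * ((m : ℤ) : ℝ) * π, a + 2 * ((m + 1 : ℤ) : ℝ) * π, ?_, ?_, by push_cast; linarith,
      fun u hu => ⟨key b gb m u hu, key a ga (m + 1) u hu⟩⟩
    · push_cast; simp only [ht₀] at h4; linarith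
    · push_cast; simp only [ht₀] at ht0u; linarith

lemma sin_lower (s : ℝ) (h : ∀ k : ℤ, π / 8 ≤ |s - k * π|) :
    Real.sin (π / 8) ≤ |Real.sin s| := by
  have hπ := Real.pi_pos
  set k : ℤ := round (s / π) with hk
  have habs : |s / π - k| ≤ 1 / 2 := abs_sub_round (s / π)
  set s₀ : ℝ := s - k * π with hs₀
  have heq : s₀ = (s / π - k) * π := by rw [hs₀]; field_simp
  have hs₀2 : |s₀| ≤ π / 2 := by
    rw [heq, abs_mul, abs_of_pos hπ]; nlinarith
  have hs₀8 : π / 8 ≤ |s₀| := h k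
  have hsin : |Real.sin s| = |Real.sin s₀| := by
    have hss : s = s₀ + k * π := by rw [hs₀]; ring
    rw [hss, Real.sin_add_int_mul_pi, abs_mul]
    have h1 : |((-1 : ℝ)) ^ k| = 1 := by
      rcases Int.even_or_odd k with he | ho
      · rw [he.neg_one_zpow, abs_one]
      · rw [ho.neg_one_zpow, abs_neg, abs_one]
    rw [h1, one_mul]
  rw [hsin]
  have h8 : Real.sin (π / 8) ≤ Real.sin |s₀| := by
    apply Real.strictMonoOn_sin.monotoneOn ⟨by linarith, by linarith⟩
      ⟨by linarith [abs_nonneg s₀], hs₀2⟩ hs₀8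
  have hfin : Real.sin |s₀| ≤ |Real.sin s₀| := by
    rcases le_or_gt 0 s₀ with h' | h'
    · rw [abs_of_nonneg h']; exact le_abs_self _
    · rw [abs_of_neg h', Real.sin_neg]; exact neg_le_abs _
  linarith

lemma complex_sin_lower (w : ℂ) : |Real.sin w.re| ≤ ‖Complex.sin w‖ := by
  have hre : (Complex.sin w).re = Real.sin w.re * Real.cosh w.im := by
    rw [Complex.sin_eq]
    simp [Complex.sin_ofReal_re, Complex.cosh_ofReal_re, Complex.cos_ofReal_re,
      Complex.sinh_ofReal_re, Complex.sin_ofReal_im, Complex.cosh_ofReal_im]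
  calc |Real.sin w.re| = |Real.sin w.re| * 1 := (mul_one _).symm
  _ ≤ |Real.sin w.re| * Real.cosh w.im := by
      have := Real.one_le_cosh w.im
      nlinarith [abs_nonneg (Real.sin w.re)]
  _ = |Real.sin w.re * Real.cosh w.im| := by
      rw [abs_mul, abs_of_pos (Real.cosh_pos _)]
  _ = |(Complex.sin w).re| := by rw [hre]
  _ ≤ ‖Complex.sin w‖ := Complex.abs_re_le_norm _


lemma complex_sin_lower' (a b : ℝ) :
    |Real.sin a| ≤ ‖Complex.sin ((a : ℂ) + (b : ℂ) * Complex.I)‖ := by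
  have := complex_sin_lower ((a : ℂ) + (b : ℂ) * Complex.I)
  simpa using this

lemma lamC_abs_lower (p : ℕ) (hp : 0 < p) (α γ : ℝ)
    (hγ : Real.cos γ = (-1 : ℝ) ^ p * Real.cos ((p : ℝ) * α)) (x c : ℝ)
    (h : ∀ u, IsBad γ u → π / 4 ≤ |(p : ℝ) * x - u|) :
    2 * Real.sin (π / 8) ^ 2 ≤ ‖LamC p α ((x : ℂ) + (c : ℂ) * Complex.I)‖ := by
  have hπ := Real.pi_pos
  set w : ℂ := (p : ℂ) * ((x : ℂ) + (c : ℂ) * Complex.I) with hw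
  have hcast : ((-1 : ℂ)) ^ p * Complex.cos ((p : ℂ) * (α : ℂ)) = Complex.cos (γ : ℂ) := by
    rw [← Complex.ofReal_cos, hγ]
    push_cast [Complex.ofReal_cos]
    ring
  have hL : LamC p α ((x : ℂ) + (c : ℂ) * Complex.I)
      = -2 * Complex.sin ((w + γ) / 2) * Complex.sin ((w - γ) / 2) := by
    rw [LamC, hcast, Complex.cos_sub_cos]
  have hs1 : (w + γ) / 2 = ((((p : ℝ) * x + γ) / 2 : ℝ) : ℂ)
      + ((((p : ℝ) * c / 2) : ℝ) : ℂ) * Complex.I := by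
    rw [hw]; push_cast; ring
  have hs2 : (w - γ) / 2 = ((((p : ℝ) * x - γ) / 2 : ℝ) : ℂ)
      + ((((p : ℝ) * c / 2) : ℝ) : ℂ) * Complex.I := by
    rw [hw]; push_cast; ring
  have b1 : Real.sin (π / 8) ≤ |Real.sin (((p : ℝ) * x + γ) / 2)| := by
    apply sin_lower
    intro k
    have hb : IsBad γ (-γ + 2 * k * π) := Or.inr (Or.inr ⟨k, rfl⟩)
    have := h _ hb
    rw [show ((p : ℝ) * x + γ) / 2 - k * π = ((p : ℝ) * x - (-γ + 2 * k * π)) / 2 by ring,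
      abs_div]
    rw [show |(2 : ℝ)| = 2 by norm_num]
    linarith
  have b2 : Real.sin (π / 8) ≤ |Real.sin (((p : ℝ) * x - γ) / 2)| := by
    apply sin_lower
    intro k
    have hb : IsBad γ (γ + 2 * k * π) := Or.inr (Or.inl ⟨k, rfl⟩)
    have := h _ hb
    rw [show ((p : ℝ) * x - γ) / 2 - k * π = ((p : ℝ) * x - (γ + 2 * k * π)) / 2 by ring,
      abs_div]
    rw [show |(2 : ℝ)| = 2 by norm_num]
    linarith
  have c1 : |Real.sin (((p : ℝ) * x + γ) / 2)| ≤ ‖Complex.sin ((w + γ) / 2)‖ := by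
    rw [hs1]; exact complex_sin_lower' _ _
  have c2 : |Real.sin (((p : ℝ) * x - γ) / 2)| ≤ ‖Complex.sin ((w - γ) / 2)‖ := by
    rw [hs2]; exact complex_sin_lower' _ _
  have s8 : 0 ≤ Real.sin (π / 8) := Real.sin_nonneg_of_nonneg_of_le_pi (by positivity) (by linarith)
  rw [hL, norm_mul, norm_mul]
  have h2 : ‖(-2 : ℂ)‖ = 2 := by
    rw [norm_neg]; simp
  rw [h2]
  nlinarith [b1.trans c1, b2.trans c2, abs_nonneg (Real.sin (((p : ℝ) * x + γ) / 2)),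
    abs_nonneg (Real.sin (((p : ℝ) * x - γ) / 2)),
    (norm_nonneg (Complex.sin ((w + γ) / 2)))]

lemma two_sin_sq_lower : π ^ 2 / 128 ≤ 2 * Real.sin (π / 8) ^ 2 := by
  have h1 : 2 * Real.sin (π / 8) ^ 2 = 1 - Real.sqrt 2 / 2 := by
    have h := Real.sin_sq_eq_half_sub (π / 8)
    rw [show 2 * (π / 8) = π / 4 by ring, Real.cos_pi_div_four] at h
    linarith
  have h2 : Real.sqrt 2 ≤ 1.5 := by
    nlinarith [Real.sq_sqrt (by norm_num : (0 : ℝ) ≤ 2), Real.sqrt_nonneg 2]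
  have h3 : π < 3.15 := Real.pi_lt_d2
  nlinarith [Real.pi_pos]

theorem exists_good_vertical_contour_abscissae (p : ℕ) (hp : 0 < p) (θ α : ℝ) :
    ∃ zm zp : ℝ, zm < θ ∧ θ < zp ∧ zp - zm ≤ 5 * π / (2 * p) ∧
      (∀ χ : ℝ, (Lam p α χ = 0 ∨ ∃ n : ℤ, χ = (n : ℝ) * π / p) →
        π / (4 * p) ≤ |zm - χ| ∧ π / (4 * p) ≤ |zp - χ|) ∧
      π / (4 * p) ≤ |zm - θ| ∧ π / (4 * p) ≤ |zp - θ| ∧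
      (∀ c : ℝ, ∀ z ∈ ({zm, zp} : Set ℝ),
        π ^ 3 / (512 * p) ≤
          ‖LamC p α ((z : ℂ) + c * Complex.I)‖ *
            ‖(z : ℂ) + c * Complex.I - (θ : ℂ)‖) := by
  have hπ := Real.pi_pos
  have hP : (0:ℝ) < p := by exact_mod_cast hp
  set P : ℝ := (p : ℝ) with hPdef
  set β : ℝ := (-1 : ℝ) ^ p * Real.cos (P * α) with hβdef
  have hβ1 : -1 ≤ β ∧ β ≤ 1 := by
    have h1 : |β| ≤ 1 := by
      rw [hβdef, abs_mul, abs_pow, abs_neg, abs_one, one_pow, one_mul]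
      exact Real.abs_cos_le_one _
    exact ⟨neg_le_of_abs_le h1, le_of_abs_le h1⟩
  set γ : ℝ := Real.arccos β with hγdef
  have hγcos : Real.cos γ = β := Real.cos_arccos hβ1.1 hβ1.2
  have hγ0 : 0 ≤ γ := Real.arccos_nonneg β
  have hγπ : γ ≤ π := Real.arccos_le_pi β
  obtain ⟨um, up, hum, hup, hdiff, hgood⟩ := exists_good_pair γ (P * θ) hγ0 hγπ
  refine ⟨um / P, up / P, ?_, ?_, ?_, ?_, ?_, ?_, ?_⟩
  · rw [div_lt_iff₀ hP]; nlinarith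
  · rw [lt_div_iff₀ hP]; nlinarith
  · rw [show up / P - um / P = (up - um) / P by ring,
      div_le_div_iff₀ (by positivity) (by positivity)]
    nlinarith
  · -- distance to zeros and coalescence points
    intro χ hχ
    have hbad : IsBad γ (P * χ) := by
      rcases hχ with h0 | ⟨n, rfl⟩
      · have hcc : Real.cos (P * χ) = Real.cos γ := by
          rw [hγcos]
          have := h0
          rw [Lam] at this
          linarith
        rw [Real.cos_eq_cos_iff] at hcc
        obtain ⟨k, hk | hk⟩ := hcc
        · exact Or.inr (Or.inl ⟨-k, by push_cast; linarith⟩)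
        · exact Or.inr (Or.inr ⟨k, by linarith⟩)
      · exact Or.inl ⟨n, by field_simp⟩
    obtain ⟨h1, h2⟩ := hgood _ hbad
    constructor
    · rw [show um / P - χ = (um - P * χ) / P by field_simp, abs_div, abs_of_pos hP,
        div_le_div_iff₀ (by positivity) hP]
      calc π * P = (π / 4) * (4 * P) := by ring
      _ ≤ |um - P * χ| * (4 * P) := by nlinarith [abs_nonneg (um - P * χ)]
    · rw [show up / P - χ = (up - P * χ) / P by field_simp, abs_div, abs_of_pos hP,
        div_le_div_iff₀ (by positivity) hP]
      calc π * P = (π / 4) * (4 * P) := by ring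
      _ ≤ |up - P * χ| * (4 * P) := by nlinarith [abs_nonneg (up - P * χ)]
  · -- distance from θ
    rw [show um / P - θ = (um - P * θ) / P by field_simp, abs_div, abs_of_pos hP,
      div_le_div_iff₀ (by positivity) hP]
    have : π / 4 ≤ |um - P * θ| := by
      rw [abs_sub_comm, abs_of_nonneg (by linarith : 0 ≤ P * θ - um)]
      linarith
    nlinarith [abs_nonneg (um - P * θ)]
  · rw [show up / P - θ = (up - P * θ) / P by field_simp, abs_div, abs_of_pos hP,
      div_le_div_iff₀ (by positivity) hP]
    have : π / 4 ≤ |up - P * θ| := by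
      rw [abs_of_nonneg (by linarith : 0 ≤ up - P * θ)]
      linarith
    nlinarith [abs_nonneg (up - P * θ)]
  · -- the main estimate
    intro c z hz
    have main : ∀ v : ℝ, (∀ u, IsBad γ u → π / 4 ≤ |v - u|) → π / 4 ≤ |v - P * θ| →
        π ^ 3 / (512 * P) ≤
          ‖LamC p α ((↑(v / P) : ℂ) + (c : ℂ) * Complex.I)‖ *
            ‖(↑(v / P) : ℂ) + (c : ℂ) * Complex.I - (θ : ℂ)‖ := by
      intro v hv hvθ
      have hA : 2 * Real.sin (π / 8) ^ 2 ≤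
          ‖LamC p α ((↑(v / P) : ℂ) + (c : ℂ) * Complex.I)‖ := by
        apply lamC_abs_lower p hp α γ (by rw [hγcos, hβdef]) (v / P) c
        intro u hu
        rw [show (p : ℝ) * (v / P) = v by rw [hPdef] at hP ⊢; field_simp]
        exact hv u hu
      have hB : π / (4 * P) ≤
          ‖(↑(v / P) : ℂ) + (c : ℂ) * Complex.I - (θ : ℂ)‖ := by
        have hre : ((↑(v / P) : ℂ) + (c : ℂ) * Complex.I - (θ : ℂ)).re = v / P - θ := by simp
        have h1 : |v / P - θ| ≤ ‖(↑(v / P) : ℂ) + (c : ℂ) * Complex.I - (θ : ℂ)‖ := by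
          rw [← hre]; exact Complex.abs_re_le_norm _
        have h2 : π / (4 * P) ≤ |v / P - θ| := by
          rw [show v / P - θ = (v - P * θ) / P by field_simp, abs_div, abs_of_pos hP,
            div_le_div_iff₀ (by positivity) hP]
          nlinarith [abs_nonneg (v - P * θ)]
        linarith
      have hnum := two_sin_sq_lower
      calc π ^ 3 / (512 * P) = (π ^ 2 / 128) * (π / (4 * P)) := by
            field_simp; ring
      _ ≤ (2 * Real.sin (π / 8) ^ 2) * (π / (4 * P)) := by
            apply mul_le_mul_of_nonneg_right hnum (by positivity)
      _ ≤ ‖LamC p α ((↑(v / P) : ℂ) + (c : ℂ) * Complex.I)‖ *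
            ‖(↑(v / P) : ℂ) + (c : ℂ) * Complex.I - (θ : ℂ)‖ := by
            apply mul_le_mul hA hB (by positivity) (norm_nonneg _)
    rcases hz with rfl | hz'
    · apply main um (fun u hu => (hgood u hu).1)
      rw [abs_sub_comm, abs_of_nonneg (by linarith : 0 ≤ P * θ - um)]
      linarith
    · rw [Set.mem_singleton_iff] at hz'
      subst hz'
      apply main up (fun u hu => (hgood u hu).2)
      rw [abs_of_nonneg (by linarith : 0 ≤ up - P * θ)]
      linarith
end

section
/- (Residue evaluation of the embedding contour integral.) Let p be a positive integer and α ∈ ℝ. Let R ⊂ ℂ be a closed axis-parallel rectangle with positively oriented boundary γ, let θ be in the interior of R with Λ(θ,α) ≠ 0, and suppose χ₁ ≠ χ₂ are the only zeros of Λ(·,α) in R, both lying in the interior of R, with sin(p χ₁) ≠ 0 and sin(p χ₂) ≠ 0. Then for every function f holomorphic on an open set containing R, (1/(2πi)) ∮_γ f(z) / (Λ(z,α)(z − θ)) dz = f(θ)/Λ(θ,α) − f(χ₁)/(p (χ₁ − θ) sin(p χ₁)) − f(χ₂)/(p (χ₂ − θ) sin(p χ₂)). -/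
open Real

/-- The closed axis-parallel rectangle `[a, a'] × [b, b'] ⊂ ℂ`. -/
def closedRect (a a' b b' : ℝ) : Set ℂ :=
  {z : ℂ | z.re ∈ Set.Icc a a' ∧ z.im ∈ Set.Icc b b'}

/-- The contour integral of `f` along the positively oriented (anticlockwise) boundary of
the axis-parallel rectangle `[a, a'] × [b, b'] ⊂ ℂ`: the sum of the four oriented
edge integrals. -/
noncomputable def rectIntegral (a a' b b' : ℝ) (f : ℂ → ℂ) : ℂ :=
  ((∫ x : ℝ in a..a', f ((x : ℂ) + (b : ℂ) * Complex.I)) -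
    ∫ x : ℝ in a..a', f ((x : ℂ) + (b' : ℂ) * Complex.I)) +
  Complex.I * ((∫ y : ℝ in b..b', f ((a' : ℂ) + (y : ℂ) * Complex.I)) -
    ∫ y : ℝ in b..b', f ((a : ℂ) + (y : ℂ) * Complex.I))


open Set intervalIntegral



lemma aux_hasDerivAt_log_h (c : ℂ) (x : ℝ) (h : (x:ℂ) + c ∈ Complex.slitPlane) :
    HasDerivAt (fun t : ℝ => Complex.log ((t:ℂ) + c)) (((x:ℂ) + c)⁻¹) x := by
  have h1 : HasDerivAt (fun z : ℂ => Complex.log (z + c)) (((x:ℂ) + c)⁻¹) (x:ℂ) := by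
    have := (Complex.hasDerivAt_log h).comp (x:ℂ) ((hasDerivAt_id ((x:ℂ))).add_const c)
    rw [mul_one] at this
    exact this
  exact h1.comp_ofReal

lemma aux_hasDerivAt_log_v (c : ℂ) (y : ℝ) (h : (y:ℂ) * Complex.I + c ∈ Complex.slitPlane) :
    HasDerivAt (fun t : ℝ => -Complex.I * Complex.log ((t:ℂ) * Complex.I + c))
      (((y:ℂ) * Complex.I + c)⁻¹) y := by
  have h0 : HasDerivAt (fun z : ℂ => z * Complex.I + c) Complex.I (y:ℂ) := by
    simpa using ((hasDerivAt_id ((y:ℂ))).mul_const Complex.I).add_const c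
  have h1 : HasDerivAt (fun z : ℂ => -Complex.I * Complex.log (z * Complex.I + c))
      (-Complex.I * ((((y:ℂ) * Complex.I + c))⁻¹ * Complex.I)) (y:ℂ) :=
    (((Complex.hasDerivAt_log h).comp (y:ℂ) h0)).const_mul _
  have h2 : -Complex.I * ((((y:ℂ) * Complex.I + c))⁻¹ * Complex.I) = (((y:ℂ) * Complex.I + c))⁻¹ := by
    have : (Complex.I : ℂ) * Complex.I = -1 := Complex.I_mul_I
    field_simp
    rw [Complex.I_sq]; ring
  rw [h2] at h1
  exact h1.comp_ofReal

lemma aux_hasDerivAt_log_vneg (c : ℂ) (y : ℝ) (h : -((y:ℂ) * Complex.I + c) ∈ Complex.slitPlane) :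
    HasDerivAt (fun t : ℝ => -Complex.I * Complex.log (-((t:ℂ) * Complex.I + c)))
      (((y:ℂ) * Complex.I + c)⁻¹) y := by
  have h0 : HasDerivAt (fun z : ℂ => -(z * Complex.I + c)) (-Complex.I) (y:ℂ) := by
    have := (((hasDerivAt_id ((y:ℂ))).mul_const Complex.I).add_const c).neg
    rw [one_mul] at this
    exact this
  have h1 : HasDerivAt (fun z : ℂ => -Complex.I * Complex.log (-(z * Complex.I + c)))
      (-Complex.I * ((-(((y:ℂ) * Complex.I + c)))⁻¹ * -Complex.I)) (y:ℂ) :=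
    ((Complex.hasDerivAt_log h).comp (y:ℂ) h0).const_mul _
  have h2 : -Complex.I * ((-(((y:ℂ) * Complex.I + c)))⁻¹ * -Complex.I)
      = (((y:ℂ) * Complex.I + c))⁻¹ := by
    rw [inv_neg]
    have : (Complex.I : ℂ) * Complex.I = -1 := Complex.I_mul_I
    field_simp
    rw [Complex.I_sq]; ring
  rw [h2] at h1
  exact h1.comp_ofReal

lemma aux_log_sub_log_neg_of_im_pos {u : ℂ} (h : 0 < u.im) :
    Complex.log u - Complex.log (-u) = (π : ℂ) * Complex.I := by
  have ha : Complex.arg (-u) = Complex.arg u - π := Complex.arg_neg_eq_arg_sub_pi_of_im_pos h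
  rw [Complex.log, Complex.log, norm_neg, ha]
  push_cast
  ring

lemma aux_log_neg_sub_log_of_im_neg {u : ℂ} (h : u.im < 0) :
    Complex.log (-u) - Complex.log u = (π : ℂ) * Complex.I := by
  have ha : Complex.arg (-u) = Complex.arg u + π := Complex.arg_neg_eq_arg_add_pi_of_im_neg h
  rw [Complex.log, Complex.log, norm_neg, ha]
  push_cast
  ring

lemma rectIntegral_pole (a a' b b' : ℝ) (w : ℂ)
    (ha : a < w.re) (ha' : w.re < a') (hb : b < w.im) (hb' : w.im < b') :
    rectIntegral a a' b b' (fun z => (z - w)⁻¹) = 2 * (π : ℂ) * Complex.I := by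
  -- horizontal edge at height t, with t ≠ w.im
  have horiz : ∀ t : ℝ, t ≠ w.im →
      (∫ x : ℝ in a..a', (((x:ℂ) + (t:ℂ) * Complex.I) - w)⁻¹)
        = Complex.log ((a':ℂ) + ((t:ℂ) * Complex.I - w))
          - Complex.log ((a:ℂ) + ((t:ℂ) * Complex.I - w)) := by
    intro t ht
    have him : ∀ x : ℝ, ((x:ℂ) + ((t:ℂ) * Complex.I - w)).im = t - w.im := by
      intro x; simp
    have hslit : ∀ x : ℝ, (x:ℂ) + ((t:ℂ) * Complex.I - w) ∈ Complex.slitPlane := by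
      intro x
      exact Or.inr (by rw [him]; exact sub_ne_zero.mpr ht)
    have hne : ∀ x : ℝ, (x:ℂ) + ((t:ℂ) * Complex.I - w) ≠ 0 := fun x =>
      Complex.slitPlane_ne_zero (hslit x)
    have hint : IntervalIntegrable (fun x : ℝ => ((x:ℂ) + ((t:ℂ) * Complex.I - w))⁻¹)
        MeasureTheory.volume a a' := by
      apply Continuous.intervalIntegrable
      exact (Complex.continuous_ofReal.add continuous_const).inv₀ hne
    have := intervalIntegral.integral_eq_sub_of_hasDerivAt
      (f := fun x : ℝ => Complex.log ((x:ℂ) + ((t:ℂ) * Complex.I - w)))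
      (fun x _ => aux_hasDerivAt_log_h _ x (hslit x)) hint
    rw [← this]
    apply intervalIntegral.integral_congr
    intro x _
    ring_nf
  -- vertical right edge
  have vertR : (∫ y : ℝ in b..b', (((a':ℂ) + (y:ℂ) * Complex.I) - w)⁻¹)
      = -Complex.I * Complex.log ((b':ℂ) * Complex.I + ((a':ℂ) - w))
        - -Complex.I * Complex.log ((b:ℂ) * Complex.I + ((a':ℂ) - w)) := by
    have hre : ∀ y : ℝ, ((y:ℂ) * Complex.I + ((a':ℂ) - w)).re = a' - w.re := by
      intro y; simp
    have hslit : ∀ y : ℝ, (y:ℂ) * Complex.I + ((a':ℂ) - w) ∈ Complex.slitPlane := by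
      intro y; exact Or.inl (by rw [hre]; linarith)
    have hne : ∀ y : ℝ, (y:ℂ) * Complex.I + ((a':ℂ) - w) ≠ 0 := fun y =>
      Complex.slitPlane_ne_zero (hslit y)
    have hint : IntervalIntegrable (fun y : ℝ => ((y:ℂ) * Complex.I + ((a':ℂ) - w))⁻¹)
        MeasureTheory.volume b b' := by
      apply Continuous.intervalIntegrable
      exact ((Complex.continuous_ofReal.mul continuous_const).add continuous_const).inv₀ hne
    have := intervalIntegral.integral_eq_sub_of_hasDerivAt
      (f := fun y : ℝ => -Complex.I * Complex.log ((y:ℂ) * Complex.I + ((a':ℂ) - w)))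
      (fun y _ => aux_hasDerivAt_log_v _ y (hslit y)) hint
    rw [← this]
    apply intervalIntegral.integral_congr
    intro y _
    ring_nf
  -- vertical left edge
  have vertL : (∫ y : ℝ in b..b', (((a:ℂ) + (y:ℂ) * Complex.I) - w)⁻¹)
      = -Complex.I * Complex.log (-((b':ℂ) * Complex.I + ((a:ℂ) - w)))
        - -Complex.I * Complex.log (-((b:ℂ) * Complex.I + ((a:ℂ) - w))) := by
    have hre : ∀ y : ℝ, (-((y:ℂ) * Complex.I + ((a:ℂ) - w))).re = w.re - a := by
      intro y; simp
    have hslit : ∀ y : ℝ, -((y:ℂ) * Complex.I + ((a:ℂ) - w)) ∈ Complex.slitPlane := by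
      intro y; exact Or.inl (by rw [hre]; linarith)
    have hne : ∀ y : ℝ, (y:ℂ) * Complex.I + ((a:ℂ) - w) ≠ 0 := by
      intro y hy
      exact Complex.slitPlane_ne_zero (hslit y) (by rw [hy]; simp)
    have hint : IntervalIntegrable (fun y : ℝ => ((y:ℂ) * Complex.I + ((a:ℂ) - w))⁻¹)
        MeasureTheory.volume b b' := by
      apply Continuous.intervalIntegrable
      exact ((Complex.continuous_ofReal.mul continuous_const).add continuous_const).inv₀ hne
    have := intervalIntegral.integral_eq_sub_of_hasDerivAt
      (f := fun y : ℝ => -Complex.I * Complex.log (-((y:ℂ) * Complex.I + ((a:ℂ) - w))))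
      (fun y _ => aux_hasDerivAt_log_vneg _ y (hslit y)) hint
    rw [← this]
    apply intervalIntegral.integral_congr
    intro y _
    ring_nf
  have hbot := horiz b (ne_of_lt hb)
  have htop := horiz b' (ne_of_gt hb')
  -- key corner values
  have hc4 : Complex.log ((a:ℂ) + ((b':ℂ) * Complex.I - w))
      - Complex.log (-((b':ℂ) * Complex.I + ((a:ℂ) - w))) = (π:ℂ) * Complex.I := by
    have himpos : ((a:ℂ) + ((b':ℂ) * Complex.I - w)).im > 0 := by simp; linarith
    have := aux_log_sub_log_neg_of_im_pos himpos
    rw [← this]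
    congr 2
    ring
  have hc1 : Complex.log (-((b:ℂ) * Complex.I + ((a:ℂ) - w)))
      - Complex.log ((a:ℂ) + ((b:ℂ) * Complex.I - w)) = (π:ℂ) * Complex.I := by
    have himneg : ((a:ℂ) + ((b:ℂ) * Complex.I - w)).im < 0 := by simp; linarith
    have := aux_log_neg_sub_log_of_im_neg himneg
    rw [← this]
    congr 3
    ring
  have hR3 : ((a':ℂ) + ((b':ℂ) * Complex.I - w)) = ((b':ℂ) * Complex.I + ((a':ℂ) - w)) := by ring
  have hR2 : ((a':ℂ) + ((b:ℂ) * Complex.I - w)) = ((b:ℂ) * Complex.I + ((a':ℂ) - w)) := by ring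
  unfold rectIntegral
  rw [hbot, htop, vertR, vertL, hR3, hR2]
  have hI : Complex.I * Complex.I = -1 := Complex.I_mul_I
  linear_combination hc4 + hc1 -
    (Complex.log ((b':ℂ) * Complex.I + ((a':ℂ) - w)) - Complex.log ((b:ℂ) * Complex.I + ((a':ℂ) - w))
     - Complex.log (-((b':ℂ) * Complex.I + ((a:ℂ) - w))) + Complex.log (-((b:ℂ) * Complex.I + ((a:ℂ) - w)))) * hI





lemma rectIntegral_eq_zero {a a' b b' : ℝ} (hab : a ≤ a') (hbb : b ≤ b') (F : ℂ → ℂ)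
    (s : Set ℂ) (hs : s.Countable)
    (Hc : ContinuousOn F (closedRect a a' b b'))
    (Hd : ∀ z : ℂ, z.re ∈ Set.Ioo a a' → z.im ∈ Set.Ioo b b' → z ∉ s → DifferentiableAt ℂ F z) :
    rectIntegral a a' b b' F = 0 := by
  have hrect : Set.uIcc ((⟨a,b⟩:ℂ)).re ((⟨a',b'⟩:ℂ)).re ×ℂ Set.uIcc ((⟨a,b⟩:ℂ)).im ((⟨a',b'⟩:ℂ)).im
      = closedRect a a' b b' := by
    show Set.uIcc a a' ×ℂ Set.uIcc b b' = _
    rw [uIcc_of_le hab, uIcc_of_le hbb]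
    rfl
  have key := Complex.integral_boundary_rect_eq_zero_of_differentiable_on_off_countable
    F (⟨a,b⟩ : ℂ) (⟨a',b'⟩ : ℂ) s hs (hrect ▸ Hc) ?_
  · have : ((⟨a,b⟩:ℂ)).re = a ∧ ((⟨a',b'⟩:ℂ)).re = a' ∧ ((⟨a,b⟩:ℂ)).im = b ∧ ((⟨a',b'⟩:ℂ)).im = b' :=
      ⟨rfl, rfl, rfl, rfl⟩
    simp only [this.1, this.2.1, this.2.2.1, this.2.2.2, smul_eq_mul] at key
    unfold rectIntegral
    linear_combination key
  · intro z hz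
    rw [Set.mem_diff, Complex.mem_reProdIm] at hz
    refine Hd z ?_ ?_ hz.2
    · have := hz.1.1
      simpa [min_eq_left hab, max_eq_right hab] using this
    · have := hz.1.2
      simpa [min_eq_left hbb, max_eq_right hbb] using this

lemma rectIntegral_add (a a' b b' : ℝ) (F G : ℂ → ℂ)
    (h1 : IntervalIntegrable (fun x : ℝ => F ((x:ℂ) + (b:ℂ) * Complex.I)) MeasureTheory.volume a a')
    (h2 : IntervalIntegrable (fun x : ℝ => F ((x:ℂ) + (b':ℂ) * Complex.I)) MeasureTheory.volume a a')
    (h3 : IntervalIntegrable (fun y : ℝ => F ((a':ℂ) + (y:ℂ) * Complex.I)) MeasureTheory.volume b b')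
    (h4 : IntervalIntegrable (fun y : ℝ => F ((a:ℂ) + (y:ℂ) * Complex.I)) MeasureTheory.volume b b')
    (g1 : IntervalIntegrable (fun x : ℝ => G ((x:ℂ) + (b:ℂ) * Complex.I)) MeasureTheory.volume a a')
    (g2 : IntervalIntegrable (fun x : ℝ => G ((x:ℂ) + (b':ℂ) * Complex.I)) MeasureTheory.volume a a')
    (g3 : IntervalIntegrable (fun y : ℝ => G ((a':ℂ) + (y:ℂ) * Complex.I)) MeasureTheory.volume b b')
    (g4 : IntervalIntegrable (fun y : ℝ => G ((a:ℂ) + (y:ℂ) * Complex.I)) MeasureTheory.volume b b') :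
    rectIntegral a a' b b' (fun z => F z + G z)
      = rectIntegral a a' b b' F + rectIntegral a a' b b' G := by
  unfold rectIntegral
  rw [intervalIntegral.integral_add h1 g1, intervalIntegral.integral_add h2 g2,
    intervalIntegral.integral_add h3 g3, intervalIntegral.integral_add h4 g4]
  ring

lemma rectIntegral_const_mul (a a' b b' : ℝ) (c : ℂ) (F : ℂ → ℂ) :
    rectIntegral a a' b b' (fun z => c * F z) = c * rectIntegral a a' b b' F := by
  unfold rectIntegral
  rw [intervalIntegral.integral_const_mul, intervalIntegral.integral_const_mul,
    intervalIntegral.integral_const_mul, intervalIntegral.integral_const_mul]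
  ring







-- tiny helpers about points on edges
lemma aux_ne_of_im (x t : ℝ) (w : ℂ) (h : t ≠ w.im) : (x:ℂ) + (t:ℂ) * Complex.I ≠ w :=
  fun he => h (by rw [← he]; simp)

lemma aux_ne_of_re (s y : ℝ) (w : ℂ) (h : s ≠ w.re) : (s:ℂ) + (y:ℂ) * Complex.I ≠ w :=
  fun he => h (by rw [← he]; simp)

lemma aux_cont_pole_h (t : ℝ) (c w : ℂ) (h : t ≠ w.im) :
    Continuous (fun x : ℝ => c * (((x:ℂ) + (t:ℂ) * Complex.I) - w)⁻¹) := by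
  refine continuous_const.mul (Continuous.inv₀ ?_ fun x => sub_ne_zero.mpr (aux_ne_of_im x t w h))
  exact (Complex.continuous_ofReal.add continuous_const).sub continuous_const

lemma aux_cont_pole_v (s : ℝ) (c w : ℂ) (h : s ≠ w.re) :
    Continuous (fun y : ℝ => c * (((s:ℂ) + (y:ℂ) * Complex.I) - w)⁻¹) := by
  refine continuous_const.mul (Continuous.inv₀ ?_ fun y => sub_ne_zero.mpr (aux_ne_of_re s y w h))
  exact (continuous_const.add (Complex.continuous_ofReal.mul continuous_const)).sub continuous_const

lemma rectIntegral_three_poles (a a' b b' : ℝ) (c₁ c₂ c₃ : ℂ) (w₁ w₂ w₃ : ℂ)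
    (h1a : a < w₁.re) (h1a' : w₁.re < a') (h1b : b < w₁.im) (h1b' : w₁.im < b')
    (h2a : a < w₂.re) (h2a' : w₂.re < a') (h2b : b < w₂.im) (h2b' : w₂.im < b')
    (h3a : a < w₃.re) (h3a' : w₃.re < a') (h3b : b < w₃.im) (h3b' : w₃.im < b')
    (hpole : ∀ c : ℂ, ∀ w : ℂ, a < w.re → w.re < a' → b < w.im → w.im < b' →
      rectIntegral a a' b b' (fun z => (z - w)⁻¹) = 2 * (π:ℂ) * Complex.I)
    (hadd : ∀ F G : ℂ → ℂ,
      (IntervalIntegrable (fun x : ℝ => F ((x:ℂ) + (b:ℂ) * Complex.I)) MeasureTheory.volume a a') →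
      (IntervalIntegrable (fun x : ℝ => F ((x:ℂ) + (b':ℂ) * Complex.I)) MeasureTheory.volume a a') →
      (IntervalIntegrable (fun y : ℝ => F ((a':ℂ) + (y:ℂ) * Complex.I)) MeasureTheory.volume b b') →
      (IntervalIntegrable (fun y : ℝ => F ((a:ℂ) + (y:ℂ) * Complex.I)) MeasureTheory.volume b b') →
      (IntervalIntegrable (fun x : ℝ => G ((x:ℂ) + (b:ℂ) * Complex.I)) MeasureTheory.volume a a') →
      (IntervalIntegrable (fun x : ℝ => G ((x:ℂ) + (b':ℂ) * Complex.I)) MeasureTheory.volume a a') →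
      (IntervalIntegrable (fun y : ℝ => G ((a':ℂ) + (y:ℂ) * Complex.I)) MeasureTheory.volume b b') →
      (IntervalIntegrable (fun y : ℝ => G ((a:ℂ) + (y:ℂ) * Complex.I)) MeasureTheory.volume b b') →
      rectIntegral a a' b b' (fun z => F z + G z)
        = rectIntegral a a' b b' F + rectIntegral a a' b b' G)
    (hcmul : ∀ c : ℂ, ∀ F : ℂ → ℂ,
      rectIntegral a a' b b' (fun z => c * F z) = c * rectIntegral a a' b b' F) :
    rectIntegral a a' b b' (fun z => c₁ * (z - w₁)⁻¹ + (c₂ * (z - w₂)⁻¹ + c₃ * (z - w₃)⁻¹))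
      = (c₁ + c₂ + c₃) * (2 * (π:ℂ) * Complex.I) := by
  have i1h : ∀ t : ℝ, t ≠ w₁.im → IntervalIntegrable
      (fun x : ℝ => c₁ * (((x:ℂ) + (t:ℂ) * Complex.I) - w₁)⁻¹) MeasureTheory.volume a a' :=
    fun t ht => (aux_cont_pole_h t c₁ w₁ ht).intervalIntegrable a a'
  have i2h : ∀ t : ℝ, t ≠ w₂.im → IntervalIntegrable
      (fun x : ℝ => c₂ * (((x:ℂ) + (t:ℂ) * Complex.I) - w₂)⁻¹) MeasureTheory.volume a a' :=
    fun t ht => (aux_cont_pole_h t c₂ w₂ ht).intervalIntegrable a a'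
  have i3h : ∀ t : ℝ, t ≠ w₃.im → IntervalIntegrable
      (fun x : ℝ => c₃ * (((x:ℂ) + (t:ℂ) * Complex.I) - w₃)⁻¹) MeasureTheory.volume a a' :=
    fun t ht => (aux_cont_pole_h t c₃ w₃ ht).intervalIntegrable a a'
  have i1v : ∀ s : ℝ, s ≠ w₁.re → IntervalIntegrable
      (fun y : ℝ => c₁ * (((s:ℂ) + (y:ℂ) * Complex.I) - w₁)⁻¹) MeasureTheory.volume b b' :=
    fun s hs => (aux_cont_pole_v s c₁ w₁ hs).intervalIntegrable b b'
  have i2v : ∀ s : ℝ, s ≠ w₂.re → IntervalIntegrable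
      (fun y : ℝ => c₂ * (((s:ℂ) + (y:ℂ) * Complex.I) - w₂)⁻¹) MeasureTheory.volume b b' :=
    fun s hs => (aux_cont_pole_v s c₂ w₂ hs).intervalIntegrable b b'
  have i3v : ∀ s : ℝ, s ≠ w₃.re → IntervalIntegrable
      (fun y : ℝ => c₃ * (((s:ℂ) + (y:ℂ) * Complex.I) - w₃)⁻¹) MeasureTheory.volume b b' :=
    fun s hs => (aux_cont_pole_v s c₃ w₃ hs).intervalIntegrable b b'
  have step1 := hadd (fun z => c₂ * (z - w₂)⁻¹) (fun z => c₃ * (z - w₃)⁻¹)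
    (i2h b (ne_of_lt h2b)) (i2h b' (ne_of_gt h2b')) (i2v a' (ne_of_gt h2a')) (i2v a (ne_of_lt h2a))
    (i3h b (ne_of_lt h3b)) (i3h b' (ne_of_gt h3b')) (i3v a' (ne_of_gt h3a')) (i3v a (ne_of_lt h3a))
  have step2 := hadd (fun z => c₁ * (z - w₁)⁻¹) (fun z => c₂ * (z - w₂)⁻¹ + c₃ * (z - w₃)⁻¹)
    (i1h b (ne_of_lt h1b)) (i1h b' (ne_of_gt h1b')) (i1v a' (ne_of_gt h1a')) (i1v a (ne_of_lt h1a))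
    (((aux_cont_pole_h b c₂ w₂ (ne_of_lt h2b)).add (aux_cont_pole_h b c₃ w₃ (ne_of_lt h3b))).intervalIntegrable a a')
    (((aux_cont_pole_h b' c₂ w₂ (ne_of_gt h2b')).add (aux_cont_pole_h b' c₃ w₃ (ne_of_gt h3b'))).intervalIntegrable a a')
    (((aux_cont_pole_v a' c₂ w₂ (ne_of_gt h2a')).add (aux_cont_pole_v a' c₃ w₃ (ne_of_gt h3a'))).intervalIntegrable b b')
    (((aux_cont_pole_v a c₂ w₂ (ne_of_lt h2a)).add (aux_cont_pole_v a c₃ w₃ (ne_of_lt h3a))).intervalIntegrable b b')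
  rw [step2, step1, hcmul c₁ (fun z => (z - w₁)⁻¹), hcmul c₂ (fun z => (z - w₂)⁻¹),
    hcmul c₃ (fun z => (z - w₃)⁻¹), hpole c₁ w₁ h1a h1a' h1b h1b',
    hpole c₂ w₂ h2a h2a' h2b h2b', hpole c₃ w₃ h3a h3a' h3b h3b']
  ring

theorem residue_evaluation_of_embedding_contour_integral
    (p : ℕ) (hp : 0 < p) (α : ℝ)
    (a a' bb bb' : ℝ) (hab : a < a') (hbb : bb < bb')
    (θ χ₁ χ₂ : ℂ)
    (hθ : θ.re ∈ Set.Ioo a a' ∧ θ.im ∈ Set.Ioo bb bb')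
    (hΛθ : LamC p α θ ≠ 0)
    (hne : χ₁ ≠ χ₂)
    (hχ₁ : χ₁.re ∈ Set.Ioo a a' ∧ χ₁.im ∈ Set.Ioo bb bb')
    (hχ₂ : χ₂.re ∈ Set.Ioo a a' ∧ χ₂.im ∈ Set.Ioo bb bb')
    (hzeros : ∀ z ∈ closedRect a a' bb bb', (LamC p α z = 0 ↔ z = χ₁ ∨ z = χ₂))
    (hs₁ : Complex.sin ((p : ℂ) * χ₁) ≠ 0)
    (hs₂ : Complex.sin ((p : ℂ) * χ₂) ≠ 0)
    (f : ℂ → ℂ) (U : Set ℂ) (hU : IsOpen U)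
    (hRU : closedRect a a' bb bb' ⊆ U)
    (hf : DifferentiableOn ℂ f U) :
    (1 / (2 * (π : ℂ) * Complex.I)) * rectIntegral a a' bb bb'
        (fun z => f z / (LamC p α z * (z - θ)))
      = f θ / LamC p α θ
        - f χ₁ / ((p : ℂ) * (χ₁ - θ) * Complex.sin ((p : ℂ) * χ₁))
        - f χ₂ / ((p : ℂ) * (χ₂ - θ) * Complex.sin ((p : ℂ) * χ₂)) := by
  classical
  -- memberships
  have hθmem : θ ∈ closedRect a a' bb bb' :=
    ⟨Set.Ioo_subset_Icc_self hθ.1, Set.Ioo_subset_Icc_self hθ.2⟩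
  have hχ₁mem : χ₁ ∈ closedRect a a' bb bb' :=
    ⟨Set.Ioo_subset_Icc_self hχ₁.1, Set.Ioo_subset_Icc_self hχ₁.2⟩
  have hχ₂mem : χ₂ ∈ closedRect a a' bb bb' :=
    ⟨Set.Ioo_subset_Icc_self hχ₂.1, Set.Ioo_subset_Icc_self hχ₂.2⟩
  -- Λ basics
  have hΛdiff : Differentiable ℂ (LamC p α) := by
    have h1 : Differentiable ℂ (fun z : ℂ => Complex.cos ((p:ℂ) * z)) :=
      Complex.differentiable_cos.comp (differentiable_id.const_mul _)
    exact h1.sub_const _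
  have hΛderiv : ∀ χ : ℂ, HasDerivAt (LamC p α) (-Complex.sin ((p:ℂ) * χ) * (p:ℂ)) χ := by
    intro χ
    have h1 : HasDerivAt (fun z : ℂ => (p:ℂ) * z) ((p:ℂ)) χ := by
      simpa using (hasDerivAt_id χ).const_mul (p:ℂ)
    have h2 := (Complex.hasDerivAt_cos ((p:ℂ) * χ)).comp χ h1
    exact h2.sub_const _
  have hΛχ₁ : LamC p α χ₁ = 0 := (hzeros χ₁ hχ₁mem).mpr (Or.inl rfl)
  have hΛχ₂ : LamC p α χ₂ = 0 := (hzeros χ₂ hχ₂mem).mpr (Or.inr rfl)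
  have hθχ₁ : θ ≠ χ₁ := fun h => hΛθ (by rw [h]; exact hΛχ₁)
  have hθχ₂ : θ ≠ χ₂ := fun h => hΛθ (by rw [h]; exact hΛχ₂)
  have hpne : (p:ℂ) ≠ 0 := Nat.cast_ne_zero.mpr hp.ne'
  -- dslope of Λ at χᵢ
  have hQdiff : ∀ χ : ℂ, DifferentiableAt ℂ (dslope (LamC p α) χ) χ := by
    intro χ
    obtain ⟨q, hq⟩ := hΛdiff.analyticAt χ
    exact hq.has_fpower_series_dslope_fslope.analyticAt.differentiableAt
  have hQval : ∀ χ : ℂ, dslope (LamC p α) χ χ = -Complex.sin ((p:ℂ) * χ) * (p:ℂ) := by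
    intro χ
    rw [dslope_same]
    exact (hΛderiv χ).deriv
  have hQ₁ne : dslope (LamC p α) χ₁ χ₁ ≠ 0 := by
    rw [hQval]; exact mul_ne_zero (neg_ne_zero.mpr hs₁) hpne
  have hQ₂ne : dslope (LamC p α) χ₂ χ₂ ≠ 0 := by
    rw [hQval]; exact mul_ne_zero (neg_ne_zero.mpr hs₂) hpne
  -- residues
  set rθ : ℂ := f θ / LamC p α θ with hrθ
  set r₁ : ℂ := f χ₁ / ((χ₁ - θ) * (-Complex.sin ((p:ℂ) * χ₁) * (p:ℂ))) with hr₁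
  set r₂ : ℂ := f χ₂ / ((χ₂ - θ) * (-Complex.sin ((p:ℂ) * χ₂) * (p:ℂ))) with hr₂
  -- auxiliary holomorphic pieces
  set F : ℂ → ℂ := fun z => f z / LamC p α z with hF
  set G₁ : ℂ → ℂ := fun z => f z / (dslope (LamC p α) χ₁ z * (z - θ)) with hG₁
  set G₂ : ℂ → ℂ := fun z => f z / (dslope (LamC p α) χ₂ z * (z - θ)) with hG₂
  set g : ℂ → ℂ := fun z => f z / (LamC p α z * (z - θ)) with hg
  set ψ : ℂ → ℂ := fun z =>
    g z - rθ * (z - θ)⁻¹ - r₁ * (z - χ₁)⁻¹ - r₂ * (z - χ₂)⁻¹ with hψ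
  set φθ : ℂ → ℂ := fun z => dslope F θ z - r₁ * (z - χ₁)⁻¹ - r₂ * (z - χ₂)⁻¹ with hφθ
  set φ₁ : ℂ → ℂ := fun z => dslope G₁ χ₁ z - rθ * (z - θ)⁻¹ - r₂ * (z - χ₂)⁻¹ with hφ₁
  set φ₂ : ℂ → ℂ := fun z => dslope G₂ χ₂ z - rθ * (z - θ)⁻¹ - r₁ * (z - χ₁)⁻¹ with hφ₂
  set h : ℂ → ℂ := fun z =>
    if z = θ then φθ θ else if z = χ₁ then φ₁ χ₁ else if z = χ₂ then φ₂ χ₂ else ψ z with hh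
  have hfd : ∀ z ∈ closedRect a a' bb bb', DifferentiableAt ℂ f z :=
    fun z hz => hf.differentiableAt (hU.mem_nhds (hRU hz))
  -- value identities
  have hFθ : F θ = rθ := rfl
  have hG₁χ₁ : G₁ χ₁ = r₁ := by
    show f χ₁ / (dslope (LamC p α) χ₁ χ₁ * (χ₁ - θ)) = r₁
    rw [hQval, hr₁, mul_comm]
  have hG₂χ₂ : G₂ χ₂ = r₂ := by
    show f χ₂ / (dslope (LamC p α) χ₂ χ₂ * (χ₂ - θ)) = r₂
    rw [hQval, hr₂, mul_comm]
  -- eventual equality near θ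
  have hEqθ : h =ᶠ[nhds θ] φθ := by
    filter_upwards [eventually_ne_nhds hθχ₁, eventually_ne_nhds hθχ₂] with z h1 h2
    by_cases hzθ : z = θ
    · simp only [hh]
      rw [if_pos hzθ, hzθ]
    · simp only [hh, if_neg hzθ, if_neg h1, if_neg h2, hψ, hφθ]
      rw [dslope_of_ne _ hzθ, slope_def_field, hFθ]
      simp only [hg, hF, div_eq_mul_inv, sub_div, mul_inv]
      ring
  have hφθcont : ContinuousAt φθ θ := by
    have hFdiff : DifferentiableAt ℂ F θ :=
      (hfd θ hθmem).div (hΛdiff θ) hΛθ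
    refine ((continuousAt_dslope_same.2 hFdiff).sub ?_).sub ?_
    · exact continuousAt_const.mul
        ((continuousAt_id.sub continuousAt_const).inv₀ (sub_ne_zero.mpr hθχ₁))
    · exact continuousAt_const.mul
        ((continuousAt_id.sub continuousAt_const).inv₀ (sub_ne_zero.mpr hθχ₂))
  have hcontθ : ContinuousAt h θ := hφθcont.congr_of_eventuallyEq hEqθ
  -- eventual equality near χ₁
  have hEq₁ : h =ᶠ[nhds χ₁] φ₁ := by
    filter_upwards [eventually_ne_nhds hθχ₁.symm, eventually_ne_nhds hne,
      (hQdiff χ₁).continuousAt.eventually_ne hQ₁ne] with z h1 h2 hQz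
    by_cases hzχ₁ : z = χ₁
    · simp only [hh]
      rw [if_neg (by rw [hzχ₁]; exact Ne.symm hθχ₁), if_pos hzχ₁, hzχ₁]
    · have hΛz : LamC p α z = (z - χ₁) * dslope (LamC p α) χ₁ z := by
        rw [dslope_of_ne _ hzχ₁, slope_def_field, hΛχ₁, sub_zero, mul_comm,
          div_mul_cancel₀ _ (sub_ne_zero.mpr hzχ₁)]
      simp only [hh, if_neg h1, if_neg hzχ₁, if_neg h2, hψ, hφ₁]
      rw [dslope_of_ne _ hzχ₁, slope_def_field, hG₁χ₁]
      simp only [hg, hG₁]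
      rw [hΛz]
      simp only [div_eq_mul_inv, sub_div, mul_inv]
      ring
  have hφ₁cont : ContinuousAt φ₁ χ₁ := by
    have hG₁diff : DifferentiableAt ℂ G₁ χ₁ := by
      refine (hfd χ₁ hχ₁mem).div ((hQdiff χ₁).mul (differentiableAt_id.sub (differentiableAt_const θ))) ?_
      exact mul_ne_zero hQ₁ne (sub_ne_zero.mpr hθχ₁.symm)
    refine ((continuousAt_dslope_same.2 hG₁diff).sub ?_).sub ?_
    · exact continuousAt_const.mul
        ((continuousAt_id.sub continuousAt_const).inv₀ (sub_ne_zero.mpr hθχ₁.symm))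
    · exact continuousAt_const.mul
        ((continuousAt_id.sub continuousAt_const).inv₀ (sub_ne_zero.mpr hne))
  have hcont₁ : ContinuousAt h χ₁ := hφ₁cont.congr_of_eventuallyEq hEq₁
  -- eventual equality near χ₂
  have hEq₂ : h =ᶠ[nhds χ₂] φ₂ := by
    filter_upwards [eventually_ne_nhds hθχ₂.symm, eventually_ne_nhds hne.symm,
      (hQdiff χ₂).continuousAt.eventually_ne hQ₂ne] with z h1 h2 hQz
    by_cases hzχ₂ : z = χ₂
    · simp only [hh]
      rw [if_neg (by rw [hzχ₂]; exact Ne.symm hθχ₂), if_neg (by rw [hzχ₂]; exact Ne.symm hne),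
        if_pos hzχ₂, hzχ₂]
    · have hΛz : LamC p α z = (z - χ₂) * dslope (LamC p α) χ₂ z := by
        rw [dslope_of_ne _ hzχ₂, slope_def_field, hΛχ₂, sub_zero, mul_comm,
          div_mul_cancel₀ _ (sub_ne_zero.mpr hzχ₂)]
      simp only [hh, if_neg h1, if_neg h2, if_neg hzχ₂, hψ, hφ₂]
      rw [dslope_of_ne _ hzχ₂, slope_def_field, hG₂χ₂]
      simp only [hg, hG₂]
      rw [hΛz]
      simp only [div_eq_mul_inv, sub_div, mul_inv]
      ring
  have hφ₂cont : ContinuousAt φ₂ χ₂ := by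
    have hG₂diff : DifferentiableAt ℂ G₂ χ₂ := by
      refine (hfd χ₂ hχ₂mem).div ((hQdiff χ₂).mul (differentiableAt_id.sub (differentiableAt_const θ))) ?_
      exact mul_ne_zero hQ₂ne (sub_ne_zero.mpr hθχ₂.symm)
    refine ((continuousAt_dslope_same.2 hG₂diff).sub ?_).sub ?_
    · exact continuousAt_const.mul
        ((continuousAt_id.sub continuousAt_const).inv₀ (sub_ne_zero.mpr hθχ₂.symm))
    · exact continuousAt_const.mul
        ((continuousAt_id.sub continuousAt_const).inv₀ (sub_ne_zero.mpr hne.symm))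
  have hcont₂ : ContinuousAt h χ₂ := hφ₂cont.congr_of_eventuallyEq hEq₂
  -- generic point facts
  have hΛne : ∀ z ∈ closedRect a a' bb bb', z ≠ χ₁ → z ≠ χ₂ → LamC p α z ≠ 0 := by
    intro z hz h1 h2 h0
    rcases (hzeros z hz).1 h0 with hc | hc
    exacts [h1 hc, h2 hc]
  have hψcont : ∀ z ∈ closedRect a a' bb bb', z ≠ θ → z ≠ χ₁ → z ≠ χ₂ → ContinuousAt ψ z := by
    intro z hz h1 h2 h3
    have hgz : ContinuousAt g z := by
      refine ((hfd z hz).continuousAt).div (((hΛdiff z).continuousAt).mul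
        (continuousAt_id.sub continuousAt_const)) ?_
      exact mul_ne_zero (hΛne z hz h2 h3) (sub_ne_zero.mpr h1)
    refine ((hgz.sub ?_).sub ?_).sub ?_
    · exact continuousAt_const.mul
        ((continuousAt_id.sub continuousAt_const).inv₀ (sub_ne_zero.mpr h1))
    · exact continuousAt_const.mul
        ((continuousAt_id.sub continuousAt_const).inv₀ (sub_ne_zero.mpr h2))
    · exact continuousAt_const.mul
        ((continuousAt_id.sub continuousAt_const).inv₀ (sub_ne_zero.mpr h3))
  have hhψ : ∀ z : ℂ, z ≠ θ → z ≠ χ₁ → z ≠ χ₂ → h =ᶠ[nhds z] ψ := by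
    intro z h1 h2 h3
    filter_upwards [eventually_ne_nhds h1, eventually_ne_nhds h2, eventually_ne_nhds h3]
      with w hw1 hw2 hw3
    rw [hh]; simp only [if_neg hw1, if_neg hw2, if_neg hw3]
  -- continuity of h on the rectangle
  have hcont : ContinuousOn h (closedRect a a' bb bb') := by
    intro z hz
    by_cases hzθ : z = θ
    · rw [hzθ]; exact hcontθ.continuousWithinAt
    by_cases hzχ₁ : z = χ₁
    · rw [hzχ₁]; exact hcont₁.continuousWithinAt
    by_cases hzχ₂ : z = χ₂
    · rw [hzχ₂]; exact hcont₂.continuousWithinAt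
    exact ((hψcont z hz hzθ hzχ₁ hzχ₂).congr_of_eventuallyEq
      (hhψ z hzθ hzχ₁ hzχ₂)).continuousWithinAt
  -- differentiability off {θ, χ₁, χ₂}
  have hdiff : ∀ z : ℂ, z.re ∈ Set.Ioo a a' → z.im ∈ Set.Ioo bb bb' →
      z ∉ ({θ, χ₁, χ₂} : Set ℂ) → DifferentiableAt ℂ h z := by
    intro z hre him hs
    simp only [Set.mem_insert_iff, Set.mem_singleton_iff, not_or] at hs
    obtain ⟨h1, h2, h3⟩ := hs
    have hz : z ∈ closedRect a a' bb bb' :=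
      ⟨Set.Ioo_subset_Icc_self hre, Set.Ioo_subset_Icc_self him⟩
    have hψdiff : DifferentiableAt ℂ ψ z := by
      have hgz : DifferentiableAt ℂ g z := by
        refine (hfd z hz).div ((hΛdiff z).mul (differentiableAt_id.sub (differentiableAt_const θ))) ?_
        exact mul_ne_zero (hΛne z hz h2 h3) (sub_ne_zero.mpr h1)
      refine ((hgz.sub ?_).sub ?_).sub ?_
      · exact (differentiableAt_const _).mul
          ((differentiableAt_id.sub (differentiableAt_const _)).inv (sub_ne_zero.mpr h1))
      · exact (differentiableAt_const _).mul
          ((differentiableAt_id.sub (differentiableAt_const _)).inv (sub_ne_zero.mpr h2))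
      · exact (differentiableAt_const _).mul
          ((differentiableAt_id.sub (differentiableAt_const _)).inv (sub_ne_zero.mpr h3))
    exact (hhψ z h1 h2 h3).differentiableAt_iff.mpr hψdiff
  -- Cauchy-Goursat: the regularized integral vanishes
  have hzero : rectIntegral a a' bb bb' h = 0 :=
    rectIntegral_eq_zero hab.le hbb.le h {θ, χ₁, χ₂} (Set.toFinite _).countable hcont hdiff
  -- decompose g on the boundary
  have key : ∀ z : ℂ, z ≠ θ → z ≠ χ₁ → z ≠ χ₂ →
      g z = h z + (rθ * (z - θ)⁻¹ + (r₁ * (z - χ₁)⁻¹ + r₂ * (z - χ₂)⁻¹)) := by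
    intro z h1 h2 h3
    rw [hh]
    simp only [if_neg h1, if_neg h2, if_neg h3]
    rw [hψ]
    ring
  have hcongr : rectIntegral a a' bb bb' g = rectIntegral a a' bb bb'
      (fun z => h z + (rθ * (z - θ)⁻¹ + (r₁ * (z - χ₁)⁻¹ + r₂ * (z - χ₂)⁻¹))) := by
    unfold rectIntegral
    have e1 : ∀ t : ℝ, t ≠ θ.im → t ≠ χ₁.im → t ≠ χ₂.im →
        (∫ x : ℝ in a..a', g ((x:ℂ) + (t:ℂ) * Complex.I))
        = ∫ x : ℝ in a..a', (fun z => h z + (rθ * (z - θ)⁻¹ +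
            (r₁ * (z - χ₁)⁻¹ + r₂ * (z - χ₂)⁻¹))) ((x:ℂ) + (t:ℂ) * Complex.I) := by
      intro t h1 h2 h3
      apply intervalIntegral.integral_congr
      intro x _
      exact key _ (aux_ne_of_im x t θ h1) (aux_ne_of_im x t χ₁ h2) (aux_ne_of_im x t χ₂ h3)
    have e2 : ∀ s : ℝ, s ≠ θ.re → s ≠ χ₁.re → s ≠ χ₂.re →
        (∫ y : ℝ in bb..bb', g ((s:ℂ) + (y:ℂ) * Complex.I))
        = ∫ y : ℝ in bb..bb', (fun z => h z + (rθ * (z - θ)⁻¹ +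
            (r₁ * (z - χ₁)⁻¹ + r₂ * (z - χ₂)⁻¹))) ((s:ℂ) + (y:ℂ) * Complex.I) := by
      intro s h1 h2 h3
      apply intervalIntegral.integral_congr
      intro y _
      exact key _ (aux_ne_of_re s y θ h1) (aux_ne_of_re s y χ₁ h2) (aux_ne_of_re s y χ₂ h3)
    rw [e1 bb (ne_of_lt hθ.2.1) (ne_of_lt hχ₁.2.1) (ne_of_lt hχ₂.2.1),
      e1 bb' (ne_of_gt hθ.2.2) (ne_of_gt hχ₁.2.2) (ne_of_gt hχ₂.2.2),
      e2 a' (ne_of_gt hθ.1.2) (ne_of_gt hχ₁.1.2) (ne_of_gt hχ₂.1.2),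
      e2 a (ne_of_lt hθ.1.1) (ne_of_lt hχ₁.1.1) (ne_of_lt hχ₂.1.1)]
  -- integrability of h on the edges
  have hmapsH : ∀ t : ℝ, t ∈ Set.Icc bb bb' → ∀ x : ℝ, x ∈ Set.uIcc a a' →
      (x:ℂ) + (t:ℂ) * Complex.I ∈ closedRect a a' bb bb' := by
    intro t ht x hx
    rw [Set.uIcc_of_le hab.le] at hx
    constructor <;> simp [hx.1, hx.2, ht.1, ht.2]
  have hmapsV : ∀ s : ℝ, s ∈ Set.Icc a a' → ∀ y : ℝ, y ∈ Set.uIcc bb bb' →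
      (s:ℂ) + (y:ℂ) * Complex.I ∈ closedRect a a' bb bb' := by
    intro s hs y hy
    rw [Set.uIcc_of_le hbb.le] at hy
    constructor <;> simp [hs.1, hs.2, hy.1, hy.2]
  have hintH : ∀ t : ℝ, t ∈ Set.Icc bb bb' → IntervalIntegrable
      (fun x : ℝ => h ((x:ℂ) + (t:ℂ) * Complex.I)) MeasureTheory.volume a a' := by
    intro t ht
    apply ContinuousOn.intervalIntegrable
    refine hcont.comp ?_ (hmapsH t ht)
    exact ((Complex.continuous_ofReal.add continuous_const)).continuousOn
  have hintV : ∀ s : ℝ, s ∈ Set.Icc a a' → IntervalIntegrable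
      (fun y : ℝ => h ((s:ℂ) + (y:ℂ) * Complex.I)) MeasureTheory.volume bb bb' := by
    intro s hs
    apply ContinuousOn.intervalIntegrable
    refine hcont.comp ?_ (hmapsV s hs)
    exact (continuous_const.add (Complex.continuous_ofReal.mul continuous_const)).continuousOn
  -- continuity of the pole sum along edges
  have hpoleH : ∀ t : ℝ, t ≠ θ.im → t ≠ χ₁.im → t ≠ χ₂.im → Continuous (fun x : ℝ =>
      rθ * (((x:ℂ) + (t:ℂ) * Complex.I) - θ)⁻¹ +
        (r₁ * (((x:ℂ) + (t:ℂ) * Complex.I) - χ₁)⁻¹ +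
          r₂ * (((x:ℂ) + (t:ℂ) * Complex.I) - χ₂)⁻¹)) := by
    intro t h1 h2 h3
    exact (aux_cont_pole_h t rθ θ h1).add
      ((aux_cont_pole_h t r₁ χ₁ h2).add (aux_cont_pole_h t r₂ χ₂ h3))
  have hpoleV : ∀ s : ℝ, s ≠ θ.re → s ≠ χ₁.re → s ≠ χ₂.re → Continuous (fun y : ℝ =>
      rθ * (((s:ℂ) + (y:ℂ) * Complex.I) - θ)⁻¹ +
        (r₁ * (((s:ℂ) + (y:ℂ) * Complex.I) - χ₁)⁻¹ +
          r₂ * (((s:ℂ) + (y:ℂ) * Complex.I) - χ₂)⁻¹)) := by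
    intro s h1 h2 h3
    exact (aux_cont_pole_v s rθ θ h1).add
      ((aux_cont_pole_v s r₁ χ₁ h2).add (aux_cont_pole_v s r₂ χ₂ h3))
  -- split the integral
  have hsplit : rectIntegral a a' bb bb'
      (fun z => h z + (rθ * (z - θ)⁻¹ + (r₁ * (z - χ₁)⁻¹ + r₂ * (z - χ₂)⁻¹)))
      = rectIntegral a a' bb bb' h + rectIntegral a a' bb bb'
        (fun z => rθ * (z - θ)⁻¹ + (r₁ * (z - χ₁)⁻¹ + r₂ * (z - χ₂)⁻¹)) := by
    apply rectIntegral_add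
    · exact hintH bb ⟨le_refl _, hbb.le⟩
    · exact hintH bb' ⟨hbb.le, le_refl _⟩
    · exact hintV a' ⟨hab.le, le_refl _⟩
    · exact hintV a ⟨le_refl _, hab.le⟩
    · exact (hpoleH bb (ne_of_lt hθ.2.1) (ne_of_lt hχ₁.2.1) (ne_of_lt hχ₂.2.1)).intervalIntegrable a a'
    · exact (hpoleH bb' (ne_of_gt hθ.2.2) (ne_of_gt hχ₁.2.2) (ne_of_gt hχ₂.2.2)).intervalIntegrable a a'
    · exact (hpoleV a' (ne_of_gt hθ.1.2) (ne_of_gt hχ₁.1.2) (ne_of_gt hχ₂.1.2)).intervalIntegrable bb bb'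
    · exact (hpoleV a (ne_of_lt hθ.1.1) (ne_of_lt hχ₁.1.1) (ne_of_lt hχ₂.1.1)).intervalIntegrable bb bb'
  have hpoles : rectIntegral a a' bb bb'
      (fun z => rθ * (z - θ)⁻¹ + (r₁ * (z - χ₁)⁻¹ + r₂ * (z - χ₂)⁻¹))
      = (rθ + r₁ + r₂) * (2 * (π:ℂ) * Complex.I) := by
    apply rectIntegral_three_poles a a' bb bb' rθ r₁ r₂ θ χ₁ χ₂
      hθ.1.1 hθ.1.2 hθ.2.1 hθ.2.2 hχ₁.1.1 hχ₁.1.2 hχ₁.2.1 hχ₁.2.2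
      hχ₂.1.1 hχ₂.1.2 hχ₂.2.1 hχ₂.2.2
    · exact fun c w hwa hwa' hwb hwb' => rectIntegral_pole a a' bb bb' w hwa hwa' hwb hwb'
    · exact fun F G i1 i2 i3 i4 j1 j2 j3 j4 =>
        rectIntegral_add a a' bb bb' F G i1 i2 i3 i4 j1 j2 j3 j4
    · exact fun c F => rectIntegral_const_mul a a' bb bb' c F
  -- final computation
  have hfinal : rectIntegral a a' bb bb' g = (rθ + r₁ + r₂) * (2 * (π:ℂ) * Complex.I) := by
    rw [hcongr, hsplit, hzero, hpoles, zero_add]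
  have hgodef : rectIntegral a a' bb bb' (fun z => f z / (LamC p α z * (z - θ))) =
      rectIntegral a a' bb bb' g := rfl
  rw [hgodef, hfinal]
  have h2πI : (2 * (π:ℂ) * Complex.I) ≠ 0 :=
    mul_ne_zero (mul_ne_zero two_ne_zero (Complex.ofReal_ne_zero.mpr Real.pi_ne_zero))
      Complex.I_ne_zero
  rw [one_div, mul_comm, mul_assoc, mul_inv_cancel₀ h2πI, mul_one]
  rw [hrθ, hr₁, hr₂]
  have e₁ : (χ₁ - θ) * (-Complex.sin ((p:ℂ) * χ₁) * (p:ℂ))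
      = -((p:ℂ) * (χ₁ - θ) * Complex.sin ((p:ℂ) * χ₁)) := by ring
  have e₂ : (χ₂ - θ) * (-Complex.sin ((p:ℂ) * χ₂) * (p:ℂ))
      = -((p:ℂ) * (χ₂ - θ) * Complex.sin ((p:ℂ) * χ₂)) := by ring
  rw [e₁, e₂, div_neg, div_neg]
  ring
end

section
/- (Interpolation invariance of the embedding contour integral.) Let p be a positive integer and α ∈ ℝ. Let R ⊂ ℂ be a closed axis-parallel rectangle with positively oriented boundary γ, let θ be in the interior of R with Λ(θ,α) ≠ 0, and suppose Λ(z,α) ≠ 0 and z ≠ θ for all z ∈ γ. Let f, g be holomorphic on an open set containing R and suppose: f(θ) = g(θ); for every zero χ of Λ(·,α) in R, f(χ) = g(χ); and for every zero χ of Λ(·,α) in R with sin(p χ) = 0, additionally f′(χ) = g′(χ). Then ∮_γ f(z)/(Λ(z,α)(z − θ)) dz = ∮_γ g(z)/(Λ(z,α)(z − θ)) dz. -/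
open Real

/-- The positively oriented boundary of the axis-parallel rectangle
`[a, a'] × [b, b'] ⊂ ℂ`, as a set. -/
def rectBoundary (a a' b b' : ℝ) : Set ℂ :=
  {z : ℂ | z.re ∈ Set.Icc a a' ∧ z.im ∈ Set.Icc b b' ∧
    (z.re = a ∨ z.re = a' ∨ z.im = b ∨ z.im = b')}

open Filter Topology Set

lemma hasDerivAt_lamC (p : ℕ) (α : ℝ) (c : ℂ) :
    HasDerivAt (LamC p α) (-Complex.sin ((p:ℂ)*c) * (p:ℂ)) c := by
  have h1 : HasDerivAt (fun z : ℂ => (p:ℂ) * z) (p:ℂ) c := by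
    simpa using (hasDerivAt_id c).const_mul (p:ℂ)
  have h2 := (Complex.hasDerivAt_cos ((p:ℂ)*c)).comp c h1
  exact h2.sub_const ((-1 : ℂ) ^ p * Complex.cos ((p : ℂ) * (α : ℂ)))

lemma lamC_differentiable (p : ℕ) (α : ℝ) : Differentiable ℂ (LamC p α) :=
  fun c => (hasDerivAt_lamC p α c).differentiableAt

lemma cos_nat_mul_pi (n : ℕ) : Complex.cos ((n:ℂ) * (π:ℂ)) = (-1)^n := by
  induction n with
  | zero => simp
  | succ n ih =>
    have : ((n+1 : ℕ):ℂ) * (π:ℂ) = (n:ℂ)*(π:ℂ) + π := by push_cast; ring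
    rw [this, Complex.cos_add, Complex.cos_pi, Complex.sin_pi, ih]
    ring

lemma sin_nat_mul_pi' (n : ℕ) : Complex.sin ((n:ℂ) * (π:ℂ)) = 0 := by
  have := Complex.sin_int_mul_pi (n : ℤ)
  simpa using this

lemma lamC_factor (p : ℕ) (α : ℝ) (z : ℂ) :
    LamC p α z = -2 * Complex.sin (((p:ℂ)*z + (p:ℂ)*((α:ℂ)+(π:ℂ)))/2)
      * Complex.sin (((p:ℂ)*z - (p:ℂ)*((α:ℂ)+(π:ℂ)))/2) := by
  have hc : Complex.cos ((p:ℂ)*((α:ℂ)+(π:ℂ))) = (-1:ℂ)^p * Complex.cos ((p:ℂ)*(α:ℂ)) := by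
    rw [mul_add, Complex.cos_add, _root_.cos_nat_mul_pi, sin_nat_mul_pi']
    ring
  rw [LamC, ← hc, Complex.cos_sub_cos]

lemma lamC_countable_zeros (p : ℕ) (hp : 0 < p) (α : ℝ) :
    {z : ℂ | LamC p α z = 0}.Countable := by
  set ξ : ℂ := (p:ℂ)*((α:ℂ)+(π:ℂ))
  have hpc : (p:ℂ) ≠ 0 := Nat.cast_ne_zero.mpr hp.ne'
  have hsub : {z : ℂ | LamC p α z = 0} ⊆
      (Set.range fun k : ℤ => (2*(k:ℂ)*(π:ℂ) - ξ)/(p:ℂ)) ∪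
      (Set.range fun k : ℤ => (2*(k:ℂ)*(π:ℂ) + ξ)/(p:ℂ)) := by
    intro z hz
    have h0 : (-2:ℂ) * Complex.sin (((p:ℂ)*z + ξ)/2) * Complex.sin (((p:ℂ)*z - ξ)/2) = 0 := by
      rw [← lamC_factor]; exact hz
    rcases mul_eq_zero.mp h0 with h1 | h2
    · rcases mul_eq_zero.mp h1 with h1' | h1''
      · norm_num at h1'
      · obtain ⟨k, hk⟩ := Complex.sin_eq_zero_iff.mp h1''
        left
        refine ⟨k, ?_⟩
        have : (p:ℂ)*z = 2*(k:ℂ)*(π:ℂ) - ξ := by linear_combination 2*hk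
        field_simp [hpc]
        linear_combination -this
    · obtain ⟨k, hk⟩ := Complex.sin_eq_zero_iff.mp h2
      right
      refine ⟨k, ?_⟩
      have : (p:ℂ)*z = 2*(k:ℂ)*(π:ℂ) + ξ := by linear_combination 2*hk
      field_simp [hpc]
      linear_combination -this
  exact Set.Countable.mono hsub ((Set.countable_range _).union (Set.countable_range _))

lemma key_limits (p : ℕ) (hp : 0 < p) (α : ℝ) {θ c : ℂ} {h : ℂ → ℂ}
    (hΛθ : LamC p α θ ≠ 0)
    (hanal : AnalyticAt ℂ h c)
    (hcase : (LamC p α c = 0 ∧ h c = 0 ∧ (Complex.sin ((p:ℂ)*c) = 0 → deriv h c = 0)) ∨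
      (c = θ ∧ h θ = 0)) :
    (∃ L, Tendsto (fun z => h z / (LamC p α z * (z - θ))) (𝓝[≠] c) (𝓝 L)) ∧
      (∀ᶠ z in 𝓝[≠] c, LamC p α z ≠ 0 ∧ z ≠ θ) := by
  have hpc : (p:ℂ) ≠ 0 := Nat.cast_ne_zero.mpr hp.ne'
  rcases hcase with ⟨hc0, hh0, hders⟩ | ⟨rfl, hθ0⟩
  · -- c is a zero of Λ
    have hcθ : c ≠ θ := fun e => hΛθ (e ▸ hc0)
    have hcθ' : c - θ ≠ 0 := sub_ne_zero.mpr hcθ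
    have hTz : Tendsto (fun z : ℂ => z - θ) (𝓝[≠] c) (𝓝 (c - θ)) :=
      ((continuous_id.sub continuous_const).tendsto c).mono_left nhdsWithin_le_nhds
    have hne_ev : ∀ᶠ z in 𝓝[≠] c, z ≠ θ :=
      ((isOpen_compl_singleton.eventually_mem (show c ∈ ({θ} : Set ℂ)ᶜ from hcθ)).filter_mono
        nhdsWithin_le_nhds)
    have hzc_ev : ∀ᶠ z in 𝓝[≠] c, z ≠ c := by
      filter_upwards [self_mem_nhdsWithin] with z hz using hz
    by_cases hs : Complex.sin ((p:ℂ)*c) = 0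
    · -- double zero
      have hder0 : deriv h c = 0 := hders hs
      have hcosq := Complex.sin_sq_add_cos_sq ((p:ℂ)*c)
      rw [hs] at hcosq
      have hcosne : Complex.cos ((p:ℂ)*c) ≠ 0 := by
        intro hz; rw [hz] at hcosq; norm_num at hcosq
      have hcos : (-1:ℂ)^p * Complex.cos ((p:ℂ)*(α:ℂ)) = Complex.cos ((p:ℂ)*c) :=
        (sub_eq_zero.mp hc0).symm
      set σ1 : ℂ → ℂ := fun z => Complex.sin (((p:ℂ)*z + (p:ℂ)*c)/2) with hσ1def
      set σ2 : ℂ → ℂ := fun z => Complex.sin (((p:ℂ)*z - (p:ℂ)*c)/2) with hσ2def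
      have hfact : ∀ z, LamC p α z = -2 * σ1 z * σ2 z := by
        intro z
        rw [LamC, hcos, Complex.cos_sub_cos]
      have hσ1c : σ1 c = 0 := by
        show Complex.sin _ = 0
        rw [show ((p:ℂ)*c + (p:ℂ)*c)/2 = (p:ℂ)*c by ring]; exact hs
      have hσ2c : σ2 c = 0 := by
        show Complex.sin _ = 0
        rw [show ((p:ℂ)*c - (p:ℂ)*c)/2 = 0 by ring]; exact Complex.sin_zero
      have hlin1 : HasDerivAt (fun z : ℂ => ((p:ℂ)*z + (p:ℂ)*c)/2) ((p:ℂ)/2) c := by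
        simpa using (((hasDerivAt_id c).const_mul (p:ℂ)).add_const ((p:ℂ)*c)).div_const 2
      have hlin2 : HasDerivAt (fun z : ℂ => ((p:ℂ)*z - (p:ℂ)*c)/2) ((p:ℂ)/2) c := by
        simpa using (((hasDerivAt_id c).const_mul (p:ℂ)).sub_const ((p:ℂ)*c)).div_const 2
      have hd1 : HasDerivAt σ1 (Complex.cos ((p:ℂ)*c) * ((p:ℂ)/2)) c := by
        have := (Complex.hasDerivAt_sin (((p:ℂ)*c + (p:ℂ)*c)/2)).comp c hlin1
        rw [show ((p:ℂ)*c + (p:ℂ)*c)/2 = (p:ℂ)*c by ring] at this; exact this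
      have hd2 : HasDerivAt σ2 ((p:ℂ)/2) c := by
        have := (Complex.hasDerivAt_sin (((p:ℂ)*c - (p:ℂ)*c)/2)).comp c hlin2
        rw [show ((p:ℂ)*c - (p:ℂ)*c)/2 = 0 by ring, Complex.cos_zero, one_mul] at this; exact this
      have hT1 : Tendsto (slope σ1 c) (𝓝[≠] c) (𝓝 (Complex.cos ((p:ℂ)*c) * ((p:ℂ)/2))) :=
        hasDerivAt_iff_tendsto_slope.mp hd1
      have hT2 : Tendsto (slope σ2 c) (𝓝[≠] c) (𝓝 ((p:ℂ)/2)) :=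
        hasDerivAt_iff_tendsto_slope.mp hd2
      have hp2 : (p:ℂ)/2 ≠ 0 := div_ne_zero hpc two_ne_zero
      have hdσ1 : Complex.cos ((p:ℂ)*c) * ((p:ℂ)/2) ≠ 0 := mul_ne_zero hcosne hp2
      -- h factorization
      obtain ⟨q, hq⟩ := hanal
      have hq1 : AnalyticAt ℂ (dslope h c) c := ⟨q.fslope, hq.has_fpower_series_dslope_fslope⟩
      obtain ⟨q2, hq2⟩ := hq1
      have hq2' : AnalyticAt ℂ (dslope (dslope h c) c) c :=
        ⟨q2.fslope, hq2.has_fpower_series_dslope_fslope⟩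
      set h2 : ℂ → ℂ := dslope (dslope h c) c with hh2def
      have hTh2 : Tendsto h2 (𝓝[≠] c) (𝓝 (h2 c)) := hq2'.continuousAt.continuousWithinAt
      have hDne : -2 * (Complex.cos ((p:ℂ)*c) * ((p:ℂ)/2)) * ((p:ℂ)/2) * (c - θ) ≠ 0 :=
        mul_ne_zero (mul_ne_zero (mul_ne_zero (by norm_num) hdσ1) hp2) hcθ'
      have hT : Tendsto (fun z => h2 z / (-2 * slope σ1 c z * slope σ2 c z * (z - θ)))
          (𝓝[≠] c) (𝓝 (h2 c / (-2 * (Complex.cos ((p:ℂ)*c) * ((p:ℂ)/2)) * ((p:ℂ)/2) * (c - θ)))) :=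
        hTh2.div (((tendsto_const_nhds.mul hT1).mul hT2).mul hTz) hDne
      constructor
      · refine ⟨_, hT.congr' ?_⟩
        filter_upwards [hzc_ev] with z hz
        have hzc : z - c ≠ 0 := sub_ne_zero.mpr hz
        have e1 : h z = (z - c) * dslope h c z := by
          have := sub_smul_dslope h c z
          rw [hh0, sub_zero, smul_eq_mul] at this
          exact this.symm
        have e2 : dslope h c z = (z - c) * h2 z := by
          have := sub_smul_dslope (dslope h c) c z
          rw [dslope_same, hder0, sub_zero, smul_eq_mul] at this
          exact this.symm
        have eσ1 : σ1 z = (z - c) * slope σ1 c z := by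
          rw [slope_def_field, hσ1c, sub_zero]; field_simp
        have eσ2 : σ2 z = (z - c) * slope σ2 c z := by
          rw [slope_def_field, hσ2c, sub_zero]; field_simp
        show h2 z / _ = h z / (LamC p α z * (z - θ))
        rw [hfact z, e1, e2, eσ1, eσ2,
          show (z - c) * ((z - c) * h2 z) = ((z-c)*(z-c)) * h2 z by ring,
          show -2 * ((z - c) * slope σ1 c z) * ((z - c) * slope σ2 c z) * (z - θ)
            = ((z-c)*(z-c)) * (-2 * slope σ1 c z * slope σ2 c z * (z - θ)) by ring,
          mul_div_mul_left _ _ (mul_ne_zero hzc hzc)]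
      · filter_upwards [hzc_ev, hne_ev, hT1.eventually_ne hdσ1, hT2.eventually_ne hp2]
          with z hz hzθ h1 h2'
        have hzc : z - c ≠ 0 := sub_ne_zero.mpr hz
        refine ⟨?_, hzθ⟩
        rw [hfact z, show σ1 z = (z - c) * slope σ1 c z by
            rw [slope_def_field, hσ1c, sub_zero]; field_simp,
          show σ2 z = (z - c) * slope σ2 c z by
            rw [slope_def_field, hσ2c, sub_zero]; field_simp]
        exact mul_ne_zero (mul_ne_zero (by norm_num) (mul_ne_zero hzc h1)) (mul_ne_zero hzc h2')
    · -- simple zero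
      have hdΛ := hasDerivAt_lamC p α c
      have hdval : -Complex.sin ((p:ℂ)*c) * (p:ℂ) ≠ 0 := mul_ne_zero (neg_ne_zero.mpr hs) hpc
      have hTΛ : Tendsto (slope (LamC p α) c) (𝓝[≠] c) (𝓝 (-Complex.sin ((p:ℂ)*c) * (p:ℂ))) :=
        hasDerivAt_iff_tendsto_slope.mp hdΛ
      have hTh : Tendsto (slope h c) (𝓝[≠] c) (𝓝 (deriv h c)) :=
        hasDerivAt_iff_tendsto_slope.mp hanal.differentiableAt.hasDerivAt
      have hDne : -Complex.sin ((p:ℂ)*c) * (p:ℂ) * (c - θ) ≠ 0 := mul_ne_zero hdval hcθ'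
      have hT : Tendsto (fun z => slope h c z / (slope (LamC p α) c z * (z - θ)))
          (𝓝[≠] c) (𝓝 (deriv h c / (-Complex.sin ((p:ℂ)*c) * (p:ℂ) * (c - θ)))) :=
        hTh.div (hTΛ.mul hTz) hDne
      constructor
      · refine ⟨_, hT.congr' ?_⟩
        filter_upwards [hzc_ev] with z hz
        have hzc : z - c ≠ 0 := sub_ne_zero.mpr hz
        have eΛ : LamC p α z = (z - c) * slope (LamC p α) c z := by
          rw [slope_def_field, hc0, sub_zero]; field_simp
        have eh : h z = (z - c) * slope h c z := by
          rw [slope_def_field, hh0, sub_zero]; field_simp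
        show slope h c z / _ = h z / (LamC p α z * (z - θ))
        rw [eh, eΛ, show (z - c) * slope (LamC p α) c z * (z - θ)
            = (z - c) * (slope (LamC p α) c z * (z - θ)) by ring,
          mul_div_mul_left _ _ hzc]
      · filter_upwards [hzc_ev, hne_ev, hTΛ.eventually_ne hdval] with z hz hzθ h1
        have hzc : z - c ≠ 0 := sub_ne_zero.mpr hz
        refine ⟨?_, hzθ⟩
        rw [show LamC p α z = (z - c) * slope (LamC p α) c z by
          rw [slope_def_field, hc0, sub_zero]; field_simp]
        exact mul_ne_zero hzc h1
  · -- c = c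
    have hTh : Tendsto (slope h c) (𝓝[≠] c) (𝓝 (deriv h c)) :=
      hasDerivAt_iff_tendsto_slope.mp hanal.differentiableAt.hasDerivAt
    have hTΛ : Tendsto (LamC p α) (𝓝[≠] c) (𝓝 (LamC p α c)) :=
      ((lamC_differentiable p α).continuous.tendsto c).mono_left nhdsWithin_le_nhds
    have hT := hTh.div hTΛ hΛθ
    constructor
    · refine ⟨_, hT.congr' ?_⟩
      filter_upwards [self_mem_nhdsWithin] with z hz
      show slope h c z / LamC p α z = h z / (LamC p α z * (z - c))
      rw [slope_def_field, hθ0, sub_zero, div_div, mul_comm]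
    · have hev : ∀ᶠ z in 𝓝 c, LamC p α z ≠ 0 :=
        ((lamC_differentiable p α).continuous.continuousAt).eventually_ne hΛθ
      filter_upwards [hev.filter_mono nhdsWithin_le_nhds, self_mem_nhdsWithin] with z h1 h2
      exact ⟨h1, h2⟩

theorem interpolation_invariance_of_embedding_contour_integral
    (p : ℕ) (hp : 0 < p) (α : ℝ)
    (a a' bb bb' : ℝ) (hab : a < a') (hbb : bb < bb')
    (θ : ℂ)
    (hθ : θ.re ∈ Set.Ioo a a' ∧ θ.im ∈ Set.Ioo bb bb')
    (hΛθ : LamC p α θ ≠ 0)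
    (hγ : ∀ z ∈ rectBoundary a a' bb bb', LamC p α z ≠ 0 ∧ z ≠ θ)
    (f g : ℂ → ℂ) (U : Set ℂ) (hU : IsOpen U)
    (hRU : closedRect a a' bb bb' ⊆ U)
    (hfd : DifferentiableOn ℂ f U) (hgd : DifferentiableOn ℂ g U)
    (hθval : f θ = g θ)
    (hval : ∀ χ ∈ closedRect a a' bb bb', LamC p α χ = 0 → f χ = g χ)
    (hder : ∀ χ ∈ closedRect a a' bb bb', LamC p α χ = 0 →
      Complex.sin ((p : ℂ) * χ) = 0 → deriv f χ = deriv g χ) :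
    rectIntegral a a' bb bb' (fun z => f z / (LamC p α z * (z - θ)))
      = rectIntegral a a' bb bb' (fun z => g z / (LamC p α z * (z - θ))) := by
  classical
  have haa : a ≤ a' := hab.le
  have hbble : bb ≤ bb' := hbb.le
  set F : ℂ → ℂ := fun z => (f z - g z) / (LamC p α z * (z - θ)) with hFdef
  set B : Set ℂ := {z : ℂ | LamC p α z = 0} ∪ {θ} with hBdef
  set G : ℂ → ℂ := fun z => if z ∈ B then limUnder (𝓝[≠] z) F else F z with hGdef
  have hnotB : ∀ z : ℂ, LamC p α z ≠ 0 → z ≠ θ → z ∉ B := by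
    intro z h1 h2 hz
    rcases hz with hz | hz
    · exact h1 hz
    · exact h2 hz
  have hBmem : ∀ z : ℂ, z ∉ B → LamC p α z ≠ 0 ∧ z ≠ θ := by
    intro z hz
    constructor
    · intro h0; exact hz (Or.inl h0)
    · intro h0; exact hz (Or.inr h0)
  have hBcount : B.Countable :=
    (lamC_countable_zeros p hp α).union (Set.countable_singleton θ)
  have hBclosed : IsClosed B :=
    (isClosed_eq (lamC_differentiable p α).continuous continuous_const).union isClosed_singleton
  have hFdiff : ∀ z, z ∈ U → z ∉ B → DifferentiableAt ℂ F z := by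
    intro z hzU hzB
    obtain ⟨h1, h2⟩ := hBmem z hzB
    exact ((hfd.differentiableAt (hU.mem_nhds hzU)).sub
      (hgd.differentiableAt (hU.mem_nhds hzU))).div
      (((lamC_differentiable p α) z).mul (differentiableAt_id.sub_const θ))
      (mul_ne_zero h1 (sub_ne_zero.mpr h2))
  have hGF : ∀ z, z ∉ B → G =ᶠ[𝓝 z] F := by
    intro z hzB
    filter_upwards [hBclosed.isOpen_compl.mem_nhds hzB] with w hw
    simp only [hGdef, if_neg hw]
  have hmemU : ∀ z ∈ closedRect a a' bb bb', U ∈ 𝓝 z := fun z hz => hU.mem_nhds (hRU hz)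
  -- the key limits at bad points of the rectangle
  have hkey : ∀ c ∈ closedRect a a' bb bb', c ∈ B →
      (∃ L, Tendsto F (𝓝[≠] c) (𝓝 L)) ∧ (∀ᶠ z in 𝓝[≠] c, LamC p α z ≠ 0 ∧ z ≠ θ) := by
    intro c hcR hcB
    have hanal : AnalyticAt ℂ (fun z => f z - g z) c :=
      (hfd.sub hgd).analyticAt (hmemU c hcR)
    by_cases hΛc : LamC p α c = 0
    · refine key_limits p hp α hΛθ hanal (Or.inl ⟨hΛc, ?_, ?_⟩)
      · rw [sub_eq_zero]; exact hval c hcR hΛc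
      · intro hsin
        rw [deriv_fun_sub (hfd.differentiableAt (hmemU c hcR)) (hgd.differentiableAt (hmemU c hcR)),
          hder c hcR hΛc hsin, sub_self]
    · have hcθ : c = θ := by
        rcases hcB with h | h
        · exact absurd h hΛc
        · exact h
      refine key_limits p hp α hΛθ hanal (Or.inr ⟨hcθ, ?_⟩)
      rw [sub_eq_zero]; exact hθval
  -- continuity of G on the closed rectangle
  have hGcont : ContinuousOn G (closedRect a a' bb bb') := by
    intro c hcR
    by_cases hcB : c ∈ B
    · obtain ⟨⟨L, hL⟩, hev⟩ := hkey c hcR hcB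
      have hGc : G c = L := by
        simp only [hGdef, if_pos hcB]
        exact hL.limUnder_eq
      have hFG : F =ᶠ[𝓝[≠] c] G := by
        filter_upwards [hev] with z hz
        simp only [hGdef, if_neg (hnotB z hz.1 hz.2)]
      have hGL : Tendsto G (𝓝[≠] c) (𝓝 L) := hL.congr' hFG
      have hGn : Tendsto G (𝓝 c) (𝓝 L) := by
        rw [← nhdsNE_sup_pure c]
        refine hGL.sup ?_
        have := tendsto_pure_nhds G c
        rwa [hGc] at this
      have : ContinuousAt G c := by
        rw [ContinuousAt, hGc]; exact hGn
      exact this.continuousWithinAt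
    · exact ((hFdiff c (hRU hcR) hcB).continuousAt.congr
        ((hGF c hcB).symm)).continuousWithinAt
  -- differentiability of G off B in the open rectangle
  have hGdiff : ∀ x ∈ (Set.Ioo a a' ×ℂ Set.Ioo bb bb') \ B, DifferentiableAt ℂ G x := by
    intro x hx
    obtain ⟨hx1, hx2⟩ := hx
    rw [Complex.mem_reProdIm] at hx1
    have hxR : x ∈ closedRect a a' bb bb' :=
      ⟨Set.Ioo_subset_Icc_self hx1.1, Set.Ioo_subset_Icc_self hx1.2⟩
    exact ((hGF x hx2).differentiableAt_iff).mpr (hFdiff x (hRU hxR) hx2)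
  -- apply the Cauchy-Goursat theorem off a countable set
  have hseteq : Set.uIcc a a' ×ℂ Set.uIcc bb bb' = closedRect a a' bb bb' := by
    rw [Set.uIcc_of_le haa, Set.uIcc_of_le hbble]
    rfl
  have key := Complex.integral_boundary_rect_eq_zero_of_differentiable_on_off_countable G
      ((a : ℂ) + (bb : ℂ) * Complex.I) ((a' : ℂ) + (bb' : ℂ) * Complex.I) B hBcount ?_ ?_
  rotate_left
  · simp only [Complex.add_re, Complex.add_im, Complex.ofReal_re, Complex.ofReal_im,
      Complex.mul_I_re, Complex.mul_I_im, neg_zero, zero_add, add_zero]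
    rw [hseteq]
    exact hGcont
  · simp only [Complex.add_re, Complex.add_im, Complex.ofReal_re, Complex.ofReal_im,
      Complex.mul_I_re, Complex.mul_I_im, neg_zero, zero_add, add_zero,
      min_eq_left haa, max_eq_right haa, min_eq_left hbble, max_eq_right hbble]
    exact hGdiff
  simp only [Complex.add_re, Complex.add_im, Complex.ofReal_re, Complex.ofReal_im,
    Complex.mul_I_re, Complex.mul_I_im, neg_zero, zero_add, add_zero, smul_eq_mul] at key
  -- boundary membership of edge points
  have hedge1 : ∀ x ∈ Set.uIcc a a', ((x : ℂ) + (bb : ℂ) * Complex.I) ∈ rectBoundary a a' bb bb' := by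
    intro x hx
    rw [Set.uIcc_of_le haa] at hx
    refine ⟨by simpa using hx, by simpa using Set.left_mem_Icc.mpr hbble, ?_⟩
    right; right; left; simp
  have hedge2 : ∀ x ∈ Set.uIcc a a', ((x : ℂ) + (bb' : ℂ) * Complex.I) ∈ rectBoundary a a' bb bb' := by
    intro x hx
    rw [Set.uIcc_of_le haa] at hx
    refine ⟨by simpa using hx, by simpa using Set.right_mem_Icc.mpr hbble, ?_⟩
    right; right; right; simp
  have hedge3 : ∀ y ∈ Set.uIcc bb bb', ((a' : ℂ) + (y : ℂ) * Complex.I) ∈ rectBoundary a a' bb bb' := by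
    intro y hy
    rw [Set.uIcc_of_le hbble] at hy
    refine ⟨by simpa using Set.right_mem_Icc.mpr haa, by simpa using hy, ?_⟩
    right; left; simp
  have hedge4 : ∀ y ∈ Set.uIcc bb bb', ((a : ℂ) + (y : ℂ) * Complex.I) ∈ rectBoundary a a' bb bb' := by
    intro y hy
    rw [Set.uIcc_of_le hbble] at hy
    refine ⟨by simpa using Set.left_mem_Icc.mpr haa, by simpa using hy, ?_⟩
    left; simp
  have hbdsub : rectBoundary a a' bb bb' ⊆ closedRect a a' bb bb' := by
    intro z hz; exact ⟨hz.1, hz.2.1⟩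
  -- edge continuity of integrands
  have hedgecont : ∀ (φ : ℂ → ℂ), DifferentiableOn ℂ φ U → ∀ (s t : ℝ) (e : ℝ → ℂ),
      Continuous e → (∀ x ∈ Set.uIcc s t, e x ∈ rectBoundary a a' bb bb') →
      IntervalIntegrable (fun x => φ (e x) / (LamC p α (e x) * (e x - θ))) MeasureTheory.volume s t := by
    intro φ hφ s t e he hmem
    apply ContinuousOn.intervalIntegrable
    intro x hx
    have hz := hmem x hx
    obtain ⟨h1, h2⟩ := hγ _ hz
    have hzU : e x ∈ U := hRU (hbdsub hz)
    have hout : ContinuousAt (fun z => φ z / (LamC p α z * (z - θ))) (e x) :=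
      ((hφ.differentiableAt (hU.mem_nhds hzU)).continuousAt).div
        ((((lamC_differentiable p α) (e x)).continuousAt).mul
          (((differentiableAt_id (𝕜 := ℂ) (x := e x)).sub_const θ).continuousAt))
        (mul_ne_zero h1 (sub_ne_zero.mpr h2))
    exact (hout.comp he.continuousAt).continuousWithinAt
  have he1 : Continuous (fun x : ℝ => (x : ℂ) + (bb : ℂ) * Complex.I) :=
    Complex.continuous_ofReal.add continuous_const
  have he2 : Continuous (fun x : ℝ => (x : ℂ) + (bb' : ℂ) * Complex.I) :=
    Complex.continuous_ofReal.add continuous_const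
  have he3 : Continuous (fun y : ℝ => (a' : ℂ) + (y : ℂ) * Complex.I) :=
    continuous_const.add (Complex.continuous_ofReal.mul continuous_const)
  have he4 : Continuous (fun y : ℝ => (a : ℂ) + (y : ℂ) * Complex.I) :=
    continuous_const.add (Complex.continuous_ofReal.mul continuous_const)
  -- split each edge integral
  have hsplit : ∀ (s t : ℝ) (e : ℝ → ℂ), Continuous e →
      (∀ x ∈ Set.uIcc s t, e x ∈ rectBoundary a a' bb bb') →
      (∫ x : ℝ in s..t, F (e x)) = (∫ x : ℝ in s..t, f (e x) / (LamC p α (e x) * (e x - θ)))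
        - ∫ x : ℝ in s..t, g (e x) / (LamC p α (e x) * (e x - θ)) := by
    intro s t e he hmem
    rw [← intervalIntegral.integral_sub (hedgecont f hfd s t e he hmem)
      (hedgecont g hgd s t e he hmem)]
    apply intervalIntegral.integral_congr
    intro x _
    simp only [hFdef, sub_div]
  -- each edge integral of F equals that of G
  have hcongr : ∀ (s t : ℝ) (e : ℝ → ℂ),
      (∀ x ∈ Set.uIcc s t, e x ∈ rectBoundary a a' bb bb') →
      (∫ x : ℝ in s..t, F (e x)) = ∫ x : ℝ in s..t, G (e x) := by
    intro s t e hmem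
    apply intervalIntegral.integral_congr
    intro x hx
    obtain ⟨h1, h2⟩ := hγ _ (hmem x hx)
    simp only [hGdef, if_neg (hnotB _ h1 h2)]
  have E1 := hsplit a a' _ he1 hedge1
  have E2 := hsplit a a' _ he2 hedge2
  have E3 := hsplit bb bb' _ he3 hedge3
  have E4 := hsplit bb bb' _ he4 hedge4
  have C1 := hcongr a a' _ hedge1
  have C2 := hcongr a a' _ hedge2
  have C3 := hcongr bb bb' _ hedge3
  have C4 := hcongr bb bb' _ hedge4
  have final : rectIntegral a a' bb bb' F = 0 := by
    rw [rectIntegral, C1, C2, C3, C4]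
    linear_combination key
  rw [rectIntegral] at final
  rw [E1, E2, E3, E4] at final
  rw [rectIntegral, rectIntegral]
  linear_combination final
end

section
/- (Truncated-SVD residual bound, Lemma 3.1.) Let n be a positive integer and δ ≥ 0. Let A ∈ ℂ^{n×n} admit a singular value decomposition A = U Σ V*, where U, V ∈ ℂ^{n×n} are unitary and Σ is diagonal with real nonnegative diagonal entries σ₁, …, σ_n. Define the diagonal matrix Σ† whose i-th diagonal entry is 1/σ_i if σ_i > δ and 0 if σ_i ≤ δ, and set A† := V Σ† U*. Then for every d ∈ ℂⁿ and every v ∈ ℂⁿ, ‖d − A (A† d)‖₂ ≤ ‖d − A v‖₂ + δ ‖v‖₂, where ‖·‖₂ denotes the Euclidean norm on ℂⁿ. -/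
open Matrix

/-- The Euclidean (ℓ²) norm on `Fin n → ℂ`. -/
noncomputable def enorm2 {n : ℕ} (x : Fin n → ℂ) : ℝ :=
  Real.sqrt (∑ i, ‖x i‖ ^ 2)

lemma enorm2_unitary {n : ℕ} (U : Matrix (Fin n) (Fin n) ℂ)
    (hU : Uᴴ * U = 1) (x : Fin n → ℂ) : enorm2 (U.mulVec x) = enorm2 x := by
  unfold enorm2
  congr 1
  have key : ∀ y : Fin n → ℂ, (star y ⬝ᵥ y).re = ∑ i, ‖y i‖ ^ 2 := by
    intro y
    simp [dotProduct, Complex.sq_norm, Complex.normSq_eq_conj_mul_self, Complex.normSq_apply]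
  rw [← key, ← key]
  have : star (U.mulVec x) ⬝ᵥ (U.mulVec x) = star x ⬝ᵥ x := by
    rw [star_mulVec, dotProduct_mulVec, vecMul_vecMul, hU, vecMul_one]
  rw [this]

lemma sqrt_sum_sq_le {n : ℕ} (x y z : Fin n → ℝ)
    (hx : ∀ i, 0 ≤ x i) (hy : ∀ i, 0 ≤ y i) (hz : ∀ i, 0 ≤ z i)
    (h : ∀ i, x i ≤ y i + z i) :
    Real.sqrt (∑ i, x i ^ 2) ≤ Real.sqrt (∑ i, y i ^ 2) + Real.sqrt (∑ i, z i ^ 2) := by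
  have step1 : Real.sqrt (∑ i, x i ^ 2) ≤ Real.sqrt (∑ i, (y i + z i) ^ 2) := by
    apply Real.sqrt_le_sqrt
    apply Finset.sum_le_sum
    intro i _
    exact pow_le_pow_left₀ (hx i) (h i) 2
  refine step1.trans ?_
  let Y : EuclideanSpace ℝ (Fin n) := (WithLp.equiv 2 _).symm y
  let Z : EuclideanSpace ℝ (Fin n) := (WithLp.equiv 2 _).symm z
  have hnorm : ∀ w : Fin n → ℝ,
      ‖((WithLp.equiv 2 (Fin n → ℝ)).symm w : EuclideanSpace ℝ (Fin n))‖
        = Real.sqrt (∑ i, w i ^ 2) := by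
    intro w
    rw [EuclideanSpace.norm_eq]
    congr 1
    refine Finset.sum_congr rfl fun i _ => ?_
    rw [Real.norm_eq_abs, sq_abs]
    rfl
  have hYZ : ‖Y + Z‖ = Real.sqrt (∑ i, (y i + z i) ^ 2) := by
    have h2 : Y + Z = (WithLp.equiv 2 (Fin n → ℝ)).symm (fun i => y i + z i) := rfl
    rw [h2, hnorm]
  calc Real.sqrt (∑ i, (y i + z i) ^ 2) = ‖Y + Z‖ := hYZ.symm
    _ ≤ ‖Y‖ + ‖Z‖ := norm_add_le _ _
    _ = _ := by rw [hnorm y, hnorm z]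

theorem truncated_SVD_residual_bound
    (n : ℕ) (hn : 0 < n) (δ : ℝ) (hδ : 0 ≤ δ)
    (A U V : Matrix (Fin n) (Fin n) ℂ) (σ : Fin n → ℝ)
    (hσ : ∀ i, 0 ≤ σ i)
    (hUunit : U * Uᴴ = 1) (hVunit : V * Vᴴ = 1)
    (hSVD : A = U * Matrix.diagonal (fun i => (σ i : ℂ)) * Vᴴ)
    (Adag : Matrix (Fin n) (Fin n) ℂ)
    (hAdag : Adag = V * Matrix.diagonal
      (fun i => if δ < σ i then ((σ i)⁻¹ : ℂ) else 0) * Uᴴ)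
    (d v : Fin n → ℂ) :
    enorm2 (d - A.mulVec (Adag.mulVec d)) ≤ enorm2 (d - A.mulVec v) + δ * enorm2 v := by
  have hUu : Uᴴ * U = 1 := mul_eq_one_comm.mp hUunit
  have hVu : Vᴴ * V = 1 := mul_eq_one_comm.mp hVunit
  set d' : Fin n → ℂ := Uᴴ.mulVec d with hd'
  set v' : Fin n → ℂ := Vᴴ.mulVec v with hv'
  have hdids : U.mulVec d' = d := by
    rw [hd', mulVec_mulVec, hUunit, one_mulVec]
  have hvids : V.mulVec v' = v := by
    rw [hv', mulVec_mulVec, hVunit, one_mulVec]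
  -- residual equals U applied to truncated coordinates
  have hres : d - A.mulVec (Adag.mulVec d)
      = U.mulVec (fun i => if δ < σ i then 0 else d' i) := by
    have hAAdag : A * Adag
        = U * Matrix.diagonal (fun i => if δ < σ i then (1 : ℂ) else 0) * Uᴴ := by
      rw [hSVD, hAdag]
      have hassoc : U * Matrix.diagonal (fun i => (σ i : ℂ)) * Vᴴ *
          (V * Matrix.diagonal (fun i => if δ < σ i then ((σ i)⁻¹ : ℂ) else 0) * Uᴴ)
          = U * (Matrix.diagonal (fun i => (σ i : ℂ)) * (Vᴴ * V) *
              Matrix.diagonal (fun i => if δ < σ i then ((σ i)⁻¹ : ℂ) else 0)) * Uᴴ := by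
        noncomm_ring
      rw [hassoc, hVu, Matrix.mul_one]
      have hdd : Matrix.diagonal (fun i => (σ i : ℂ)) *
          Matrix.diagonal (fun i => if δ < σ i then ((σ i)⁻¹ : ℂ) else 0)
          = Matrix.diagonal (fun i => if δ < σ i then (1 : ℂ) else 0) := by
        have hfun : (fun i => (σ i : ℂ) * (if δ < σ i then ((σ i)⁻¹ : ℂ) else 0))
            = (fun i => if δ < σ i then (1 : ℂ) else 0) := by
          funext i
          by_cases hi : δ < σ i
          · have hne : (σ i : ℂ) ≠ 0 := by
              exact_mod_cast ne_of_gt (lt_of_le_of_lt hδ hi)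
            simp [hi, mul_inv_cancel₀ hne]
          · simp [hi]
        rw [Matrix.diagonal_mul_diagonal, hfun]
      rw [hdd]
    rw [← hdids]
    rw [show A.mulVec (Adag.mulVec (U.mulVec d')) = (A * Adag).mulVec (U.mulVec d') by
      rw [mulVec_mulVec]]
    rw [hAAdag]
    rw [show (U * Matrix.diagonal (fun i => if δ < σ i then (1 : ℂ) else 0) * Uᴴ).mulVec
        (U.mulVec d')
        = U.mulVec ((Matrix.diagonal (fun i => if δ < σ i then (1 : ℂ) else 0)).mulVec
          ((Uᴴ * U).mulVec d')) by
      simp only [mulVec_mulVec, Matrix.mul_assoc]]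
    rw [hUu, one_mulVec, ← mulVec_sub]
    have harg : d' - (Matrix.diagonal (fun i => if δ < σ i then (1 : ℂ) else 0)).mulVec d'
        = fun i => if δ < σ i then 0 else d' i := by
      funext i
      by_cases hi : δ < σ i <;> simp [Pi.sub_apply, mulVec_diagonal, hi]
    rw [harg]
  have hres2 : d - A.mulVec v = U.mulVec (fun i => d' i - (σ i : ℂ) * v' i) := by
    rw [hSVD, ← hdids, ← hvids]
    rw [show (U * Matrix.diagonal (fun i => (σ i : ℂ)) * Vᴴ).mulVec (V.mulVec v')
        = U.mulVec ((Matrix.diagonal (fun i => (σ i : ℂ))).mulVec ((Vᴴ * V).mulVec v')) by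
      simp only [mulVec_mulVec, Matrix.mul_assoc]]
    rw [hVu, one_mulVec, ← mulVec_sub]
    have harg : d' - (Matrix.diagonal (fun i => (σ i : ℂ))).mulVec v'
        = fun i => d' i - (σ i : ℂ) * v' i := by
      funext i
      simp [Pi.sub_apply, mulVec_diagonal]
    rw [harg]
  rw [hres, hres2, ← hvids, enorm2_unitary U hUu, enorm2_unitary U hUu, enorm2_unitary V hVu]
  unfold enorm2
  have hδnorm : δ * Real.sqrt (∑ i, ‖v' i‖ ^ 2)
      = Real.sqrt (∑ i, (δ * ‖v' i‖) ^ 2) := by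
    rw [show ∑ i, (δ * ‖v' i‖) ^ 2 = δ ^ 2 * ∑ i, ‖v' i‖ ^ 2 by
      rw [Finset.mul_sum]; exact Finset.sum_congr rfl fun i _ => by ring]
    rw [Real.sqrt_mul (sq_nonneg δ), Real.sqrt_sq hδ]
  rw [hδnorm]
  apply sqrt_sum_sq_le
  · intro i; dsimp only; positivity
  · intro i; dsimp only; positivity
  · intro i; positivity
  · intro i
    dsimp only
    by_cases hi : δ < σ i
    · simp only [hi, if_true]
      simp only [norm_zero]
      positivity
    · simp only [hi, if_false]
      push_neg at hi
      calc ‖d' i‖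
          = ‖(d' i - (σ i : ℂ) * v' i) + (σ i : ℂ) * v' i‖ := by
            rw [sub_add_cancel]
        _ ≤ ‖d' i - (σ i : ℂ) * v' i‖ + ‖(σ i : ℂ) * v' i‖ :=
            norm_add_le _ _
        _ ≤ ‖d' i - (σ i : ℂ) * v' i‖ + δ * ‖v' i‖ := by
            rw [norm_mul, Complex.norm_real, Real.norm_eq_abs, abs_of_nonneg (hσ i)]
            exact add_le_add le_rfl (mul_le_mul_of_nonneg_right hi (norm_nonneg _))
end
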